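/- arXiv:1508.03616 — 3 statements merged into one kernel-verified Lean document; each statement's English description precedes it below -/
import Mathlib

section
/- Let K₁, K₂ : ℝ^{d+1} \ {0} → ℝ be compactly supported kernels of orders ζ₁, ζ₂ with ζ₁ ∧ ζ₂ > -d_𝔰 and ζ := ζ₁ + ζ₂ + d_𝔰 < 0, where d_𝔰 = d + 2 is the parabolic dimension. Then the convolution K₁ ∗ K₂ is well-defined away from the origin and is a kernel of order ζ, with ‖K₁ ∗ K₂‖_ζ ≲ ‖K₁‖_{ζ₁} ‖K₂‖_{ζ₂}. -/
open MeasureTheory ENNReal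

/-- The parabolic norm `‖(t,x)‖_𝔰 = |t|^{1/2} + Σ_j |x_j|` on `ℝ × ℝ^d`. -/
noncomputable def pnorm {d : ℕ} (z : ℝ × (Fin d → ℝ)) : ℝ :=
  Real.sqrt |z.1| + ∑ i, |z.2 i|

section aux
variable {d : ℕ}

lemma pnorm_nonneg (z : ℝ × (Fin d → ℝ)) : 0 ≤ pnorm z := by
  unfold pnorm; positivity

lemma sqrt_abs_le_pnorm (z : ℝ × (Fin d → ℝ)) : Real.sqrt |z.1| ≤ pnorm z := by
  unfold pnorm
  have : 0 ≤ ∑ i, |z.2 i| := Finset.sum_nonneg fun i _ => abs_nonneg _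
  linarith

lemma abs_apply_le_pnorm (z : ℝ × (Fin d → ℝ)) (i : Fin d) : |z.2 i| ≤ pnorm z := by
  unfold pnorm
  have h1 : |z.2 i| ≤ ∑ j, |z.2 j| :=
    Finset.single_le_sum (fun j _ => abs_nonneg (z.2 j)) (Finset.mem_univ i)
  have := Real.sqrt_nonneg |z.1|
  linarith

lemma pnorm_eq_zero {z : ℝ × (Fin d → ℝ)} (h : pnorm z = 0) : z = 0 := by
  have h1 : Real.sqrt |z.1| = 0 :=
    le_antisymm (h ▸ sqrt_abs_le_pnorm z) (Real.sqrt_nonneg _)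
  have hz1 : z.1 = 0 := by
    have := Real.sqrt_eq_zero (abs_nonneg z.1) |>.mp h1
    exact abs_eq_zero.mp this
  have hz2 : z.2 = 0 := by
    funext i
    have h2 : |z.2 i| ≤ 0 := h ▸ abs_apply_le_pnorm z i
    exact abs_eq_zero.mp (le_antisymm h2 (abs_nonneg _))
  exact Prod.ext hz1 hz2

lemma pnorm_neg (z : ℝ × (Fin d → ℝ)) : pnorm (-z) = pnorm z := by
  unfold pnorm; simp [abs_neg]

lemma sqrt_add_le' (x y : ℝ) : Real.sqrt (x + y) ≤ Real.sqrt x + Real.sqrt y := by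
  rcases le_or_gt x 0 with hx | hx
  · rcases le_or_gt (x + y) 0 with h | h
    · rw [Real.sqrt_eq_zero_of_nonpos h]; positivity
    · have : x + y ≤ y := by linarith
      calc Real.sqrt (x+y) ≤ Real.sqrt y := Real.sqrt_le_sqrt this
        _ ≤ _ := by have := Real.sqrt_nonneg x; linarith
  · rcases le_or_gt y 0 with hy | hy
    · have : x + y ≤ x := by linarith
      calc Real.sqrt (x+y) ≤ Real.sqrt x := Real.sqrt_le_sqrt this
        _ ≤ _ := by have := Real.sqrt_nonneg y; linarith
    · have h : x + y ≤ (Real.sqrt x + Real.sqrt y)^2 := by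
        have hx2 := Real.sq_sqrt hx.le
        have hy2 := Real.sq_sqrt hy.le
        have := Real.sqrt_nonneg x
        have := Real.sqrt_nonneg y
        nlinarith
      calc Real.sqrt (x+y) ≤ Real.sqrt ((Real.sqrt x + Real.sqrt y)^2) := Real.sqrt_le_sqrt h
        _ = Real.sqrt x + Real.sqrt y := Real.sqrt_sq (by positivity)

lemma pnorm_add_le (a b : ℝ × (Fin d → ℝ)) : pnorm (a + b) ≤ pnorm a + pnorm b := by
  unfold pnorm
  have h1 : Real.sqrt |a.1 + b.1| ≤ Real.sqrt |a.1| + Real.sqrt |b.1| :=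
    le_trans (Real.sqrt_le_sqrt (abs_add_le _ _)) (sqrt_add_le' _ _)
  have h2 : ∑ i, |a.2 i + b.2 i| ≤ ∑ i, |a.2 i| + ∑ i, |b.2 i| := by
    rw [← Finset.sum_add_distrib]
    exact Finset.sum_le_sum fun i _ => abs_add_le _ _
  have e1 : (a+b).1 = a.1 + b.1 := rfl
  have h3 : ∀ i, (a+b).2 i = a.2 i + b.2 i := fun i => rfl
  simp only [e1, h3]
  linarith

lemma continuous_pnorm : Continuous (pnorm (d := d)) := by
  unfold pnorm; fun_prop

lemma measurable_pnorm : Measurable (pnorm (d := d)) := continuous_pnorm.measurable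

lemma vol_singleton_zero (p : ℝ × (Fin d → ℝ)) : volume ({p} : Set (ℝ × (Fin d → ℝ))) = 0 := by
  have : ({p} : Set (ℝ × (Fin d → ℝ))) = {p.1} ×ˢ {p.2} := by
    ext q; simp [Prod.ext_iff]
  rw [this, Measure.volume_eq_prod, Measure.prod_prod, Real.volume_singleton]
  simp

lemma measurePreserving_sub_left' (z : ℝ × (Fin d → ℝ)) :
    MeasurePreserving (fun y : ℝ × (Fin d → ℝ) => z - y) volume volume := by
  rw [Measure.volume_eq_prod]
  have h1 : MeasurePreserving (fun t : ℝ => z.1 - t) volume volume :=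
    Measure.measurePreserving_sub_left volume z.1
  have h2 : MeasurePreserving (fun x : Fin d → ℝ => z.2 - x) volume volume :=
    Measure.measurePreserving_sub_left volume z.2
  exact (h1.prod h2 : )

lemma vol_pnorm_le {r : ℝ} (hr : 0 ≤ r) :
    volume {y : ℝ × (Fin d → ℝ) | pnorm y ≤ r} ≤
      ENNReal.ofReal (2^(d+1) * r ^ ((d : ℝ) + 2)) := by
  have hsub : {y : ℝ × (Fin d → ℝ) | pnorm y ≤ r} ⊆
      Set.Icc (-(r^2)) (r^2) ×ˢ Set.pi Set.univ (fun _ => Set.Icc (-r) r) := by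
    intro y hy
    simp only [Set.mem_setOf_eq] at hy
    constructor
    · have h1 : Real.sqrt |y.1| ≤ r := le_trans (sqrt_abs_le_pnorm y) hy
      have h2 : |y.1| ≤ r^2 := by
        nlinarith [Real.sq_sqrt (abs_nonneg y.1), Real.sqrt_nonneg |y.1|]
      exact Set.mem_Icc.mpr (abs_le.mp h2)
    · intro i _
      have := le_trans (abs_apply_le_pnorm y i) hy
      exact Set.mem_Icc.mpr (abs_le.mp this)
  calc volume {y : ℝ × (Fin d → ℝ) | pnorm y ≤ r} ≤ _ := measure_mono hsub
    _ ≤ ENNReal.ofReal (2^(d+1) * r ^ ((d : ℝ) + 2)) := by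
      rw [Measure.volume_eq_prod ℝ (Fin d → ℝ), Measure.prod_prod, Real.volume_Icc, volume_pi_pi]
      simp only [Real.volume_Icc]
      rw [Finset.prod_const]
      have e1 : r^2 - -(r^2) = 2 * r^2 := by ring
      have e2 : r - -r = 2*r := by ring
      rw [e1, e2, ← ENNReal.ofReal_pow (by positivity), ← ENNReal.ofReal_mul (by positivity)]
      apply ENNReal.ofReal_le_ofReal
      rw [Finset.card_univ, Fintype.card_fin]
      have : r ^ ((d:ℝ)+2) = r ^ (d+2 : ℕ) := by
        rw [← Real.rpow_natCast r (d+2)]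
        norm_num
      rw [this]
      ring_nf
      exact le_of_eq (by ring)

lemma tsum_ofReal_geom (c t : ℝ) (hc : 0 ≤ c) (ht : 0 ≤ t) (ht1 : t < 1) :
    ∑' k : ℕ, ENNReal.ofReal (c * t^k) ≤ ENNReal.ofReal (c * (1-t)⁻¹) := by
  have h1 : ∀ k : ℕ, ENNReal.ofReal (c * t^k) = ENNReal.ofReal c * (ENNReal.ofReal t)^k := by
    intro k
    rw [ENNReal.ofReal_mul hc, ENNReal.ofReal_pow ht]
  simp_rw [h1]
  rw [ENNReal.tsum_mul_left, ENNReal.tsum_geometric]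
  have h2 : (1 : ℝ≥0∞) - ENNReal.ofReal t = ENNReal.ofReal (1 - t) := by
    rw [ENNReal.ofReal_sub _ ht, ENNReal.ofReal_one]
  rw [h2, ← ENNReal.ofReal_inv_of_pos (by linarith), ← ENNReal.ofReal_mul hc]

lemma annulus_bound (a : ℝ) {lo hi m : ℝ} (hhi : 0 ≤ hi)
    (hm : 0 ≤ m) (hmono : ∀ p : ℝ, lo ≤ p → p ≤ hi → p ^ a ≤ m) :
    ∫⁻ y in {y : ℝ × (Fin d → ℝ) | lo ≤ pnorm y ∧ pnorm y ≤ hi},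
      ENNReal.ofReal (pnorm y ^ a) ≤
      ENNReal.ofReal (m * (2^(d+1) * hi ^ ((d : ℝ) + 2))) := by
  have hms : MeasurableSet {y : ℝ × (Fin d → ℝ) | lo ≤ pnorm y ∧ pnorm y ≤ hi} :=
    (measurableSet_le measurable_const measurable_pnorm).inter
      (measurableSet_le measurable_pnorm measurable_const)
  calc ∫⁻ y in {y : ℝ × (Fin d → ℝ) | lo ≤ pnorm y ∧ pnorm y ≤ hi},
        ENNReal.ofReal (pnorm y ^ a)
      ≤ ∫⁻ _ in {y : ℝ × (Fin d → ℝ) | lo ≤ pnorm y ∧ pnorm y ≤ hi},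
        ENNReal.ofReal m := by
        apply setLIntegral_mono' hms
        intro y hy
        exact ENNReal.ofReal_le_ofReal (hmono _ hy.1 hy.2)
    _ = ENNReal.ofReal m * volume {y : ℝ × (Fin d → ℝ) | lo ≤ pnorm y ∧ pnorm y ≤ hi} := by
        rw [setLIntegral_const]
    _ ≤ ENNReal.ofReal m * ENNReal.ofReal (2^(d+1) * hi ^ ((d : ℝ) + 2)) := by
        apply mul_le_mul_right
        refine le_trans (measure_mono ?_) (vol_pnorm_le hhi)
        intro y hy; exact hy.2
    _ = ENNReal.ofReal (m * (2^(d+1) * hi ^ ((d : ℝ) + 2))) := by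
        rw [ENNReal.ofReal_mul hm]

lemma pow_rpow_swap {w : ℝ} (hw : 0 ≤ w) (k : ℕ) (b : ℝ) :
    (w ^ k) ^ b = (w ^ b) ^ k := by
  rw [← Real.rpow_natCast w k, ← Real.rpow_natCast (w ^ b) k,
    ← Real.rpow_mul hw, ← Real.rpow_mul hw, mul_comm]

lemma small_int (a : ℝ) (ha : -((d:ℝ)+2) < a) (ha0 : a < 0) :
    ∃ A : ℝ, 0 < A ∧ ∀ r : ℝ, 0 < r →
      ∫⁻ y in {y : ℝ × (Fin d → ℝ) | 0 < pnorm y ∧ pnorm y ≤ r},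
        ENNReal.ofReal (pnorm y ^ a) ≤
        ENNReal.ofReal (A * r ^ (a + ((d:ℝ)+2))) := by
  set D : ℝ := (d:ℝ) + 2 with hD
  set w : ℝ := 1/2 with hw
  have hw0 : (0:ℝ) < w := by norm_num
  have hw1 : w < 1 := by norm_num
  have hδ : 0 < a + D := by simp [hD]; linarith
  set t : ℝ := w ^ (a + D) with ht
  have ht0 : 0 < t := Real.rpow_pos_of_pos hw0 _
  have ht1 : t < 1 := Real.rpow_lt_one hw0.le hw1 hδ
  have h1t : 0 < 1 - t := by linarith
  refine ⟨2^(d+1) * w ^ a * (1 - t)⁻¹, by positivity, fun r hr => ?_⟩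
  set S : ℕ → Set (ℝ × (Fin d → ℝ)) :=
    fun k => {y | r * w^(k+1) ≤ pnorm y ∧ pnorm y ≤ r * w^k} with hS
  have hcover : {y : ℝ × (Fin d → ℝ) | 0 < pnorm y ∧ pnorm y ≤ r} ⊆ ⋃ k, S k := by
    intro y hy
    obtain ⟨hy0, hyr⟩ := hy
    have hex : ∃ n : ℕ, r * w^n < pnorm y := by
      obtain ⟨n, hn⟩ := exists_pow_lt_of_lt_one (div_pos hy0 hr) hw1
      exact ⟨n, by rw [mul_comm]; exact (lt_div_iff₀ hr).mp hn⟩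
    classical
    set m := Nat.find hex with hm
    have hm1 : r * w^m < pnorm y := Nat.find_spec hex
    have hmne : m ≠ 0 := by
      intro h0
      rw [h0] at hm1; simp at hm1; linarith
    obtain ⟨k, hk⟩ := Nat.exists_eq_succ_of_ne_zero hmne
    refine Set.mem_iUnion.mpr ⟨k, ?_, ?_⟩
    · rw [← Nat.succ_eq_add_one, ← hk]; exact hm1.le
    · have := Nat.find_min hex (m := k) (by omega)
      linarith [not_lt.mp this]
  calc ∫⁻ y in {y : ℝ × (Fin d → ℝ) | 0 < pnorm y ∧ pnorm y ≤ r},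
        ENNReal.ofReal (pnorm y ^ a)
      ≤ ∫⁻ y in ⋃ k, S k, ENNReal.ofReal (pnorm y ^ a) := lintegral_mono_set hcover
    _ ≤ ∑' k, ∫⁻ y in S k, ENNReal.ofReal (pnorm y ^ a) := lintegral_iUnion_le _ _
    _ ≤ ∑' k : ℕ, ENNReal.ofReal ((2^(d+1) * w ^ a * r ^ (a + D)) * t^k) := by
        apply ENNReal.tsum_le_tsum
        intro k
        have h1 : ∫⁻ y in S k, ENNReal.ofReal (pnorm y ^ a) ≤
            ENNReal.ofReal ((r * w^(k+1))^a * (2^(d+1) * (r * w^k) ^ D)) := by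
          apply annulus_bound a (by positivity) (by positivity)
          intro p hp1 hp2
          exact Real.rpow_le_rpow_of_nonpos (by positivity) hp1 ha0.le
        refine le_trans h1 (le_of_eq (congrArg _ ?_))
        have e1 : (r * w^(k+1) : ℝ) = (r * w^k) * w := by ring
        rw [e1, Real.mul_rpow (by positivity) hw0.le, ht]
        have e2 : (r * w^k : ℝ)^a * w^a * (2^(d+1) * (r * w^k)^D)
            = 2^(d+1) * w^a * ((r * w^k)^a * (r*w^k)^D) := by ring
        rw [e2, ← Real.rpow_add (by positivity),
          Real.mul_rpow hr.le (by positivity), pow_rpow_swap hw0.le]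
        ring
    _ ≤ ENNReal.ofReal ((2^(d+1) * w ^ a * r ^ (a + D)) * (1-t)⁻¹) :=
        tsum_ofReal_geom _ _ (by positivity) ht0.le ht1
    _ = ENNReal.ofReal (2^(d+1) * w ^ a * (1 - t)⁻¹ * r ^ (a + D)) := by ring_nf

lemma big_int (b : ℝ) (hb : b < -((d:ℝ)+2)) :
    ∃ B : ℝ, 0 < B ∧ ∀ r : ℝ, 0 < r →
      ∫⁻ y in {y : ℝ × (Fin d → ℝ) | r ≤ pnorm y},
        ENNReal.ofReal (pnorm y ^ b) ≤
        ENNReal.ofReal (B * r ^ (b + ((d:ℝ)+2))) := by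
  set D : ℝ := (d:ℝ) + 2 with hD
  have hb0 : b < 0 := by
    have hDpos : (0:ℝ) < D := by positivity
    linarith
  have hδ : b + D < 0 := by linarith
  set t : ℝ := (2:ℝ) ^ (b + D) with ht
  have ht0 : 0 < t := Real.rpow_pos_of_pos two_pos _
  have ht1 : t < 1 := Real.rpow_lt_one_of_one_lt_of_neg one_lt_two hδ
  have h1t : 0 < 1 - t := by linarith
  refine ⟨2^(d+1) * (2:ℝ) ^ D * (1 - t)⁻¹, by positivity, fun r hr => ?_⟩
  set S : ℕ → Set (ℝ × (Fin d → ℝ)) :=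
    fun k => {y | r * 2^k ≤ pnorm y ∧ pnorm y ≤ r * 2^(k+1)} with hS
  have hcover : {y : ℝ × (Fin d → ℝ) | r ≤ pnorm y} ⊆ ⋃ k, S k := by
    intro y hy
    simp only [Set.mem_setOf_eq] at hy
    have hex : ∃ n : ℕ, pnorm y < r * 2^n := by
      obtain ⟨n, hn⟩ := pow_unbounded_of_one_lt (pnorm y / r) one_lt_two
      exact ⟨n, by rw [mul_comm]; exact (div_lt_iff₀ hr).mp hn⟩
    classical
    set m := Nat.find hex with hm
    have hm1 : pnorm y < r * 2^m := Nat.find_spec hex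
    have hmne : m ≠ 0 := by
      intro h0
      rw [h0] at hm1; simp at hm1; linarith
    obtain ⟨k, hk⟩ := Nat.exists_eq_succ_of_ne_zero hmne
    refine Set.mem_iUnion.mpr ⟨k, ?_, ?_⟩
    · have := Nat.find_min hex (m := k) (by omega)
      linarith [not_lt.mp this]
    · rw [← Nat.succ_eq_add_one, ← hk]; exact hm1.le
  calc ∫⁻ y in {y : ℝ × (Fin d → ℝ) | r ≤ pnorm y},
        ENNReal.ofReal (pnorm y ^ b)
      ≤ ∑' k, ∫⁻ y in S k, ENNReal.ofReal (pnorm y ^ b) :=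
        le_trans (lintegral_mono_set hcover) (lintegral_iUnion_le _ _)
    _ ≤ ∑' k : ℕ, ENNReal.ofReal ((2^(d+1) * (2:ℝ)^D * r ^ (b + D)) * t^k) := by
        apply ENNReal.tsum_le_tsum
        intro k
        have h1 : ∫⁻ y in S k, ENNReal.ofReal (pnorm y ^ b) ≤
            ENNReal.ofReal ((r * 2^k)^b * (2^(d+1) * (r * 2^(k+1)) ^ D)) := by
          apply annulus_bound b (by positivity) (by positivity)
          intro p hp1 hp2
          exact Real.rpow_le_rpow_of_nonpos (by positivity) hp1 hb0.le
        refine le_trans h1 (le_of_eq (congrArg _ ?_))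
        have e1 : (r * 2^(k+1) : ℝ) = (r * 2^k) * 2 := by ring
        have eA : ((r * 2^k) * 2 : ℝ)^D = (r * 2^k)^D * (2:ℝ)^D :=
          Real.mul_rpow (by positivity) (by norm_num)
        have eB : (r * 2^k : ℝ)^b * (r * 2^k)^D = (r * 2^k)^(b+D) :=
          (Real.rpow_add (by positivity) b D).symm
        have eC : (r * 2^k : ℝ)^(b+D) = r^(b+D) * t^k := by
          rw [Real.mul_rpow hr.le (by positivity),
            pow_rpow_swap (by norm_num : (0:ℝ) ≤ 2), ht]
        calc (r * 2^k : ℝ)^b * (2^(d+1) * (r * 2^(k+1)) ^ D)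
            = 2^(d+1) * (2:ℝ)^D * ((r * 2^k)^b * (r * 2^k)^D) := by rw [e1, eA]; ring
          _ = 2^(d+1) * (2:ℝ)^D * r^(b+D) * t^k := by rw [eB, eC]; ring
    _ ≤ ENNReal.ofReal ((2^(d+1) * (2:ℝ)^D * r ^ (b + D)) * (1-t)⁻¹) :=
        tsum_ofReal_geom _ _ (by positivity) ht0.le ht1
    _ = ENNReal.ofReal (2^(d+1) * (2:ℝ)^D * (1 - t)⁻¹ * r ^ (b + D)) := by ring_nf

end aux
/-- if `K₁, K₂` are compactly supported kernels of orders `ζ₁, ζ₂` with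
`ζ₁ ∧ ζ₂ > -d_𝔰` and `ζ = ζ₁ + ζ₂ + d_𝔰 < 0` (`d_𝔰 = d + 2` the parabolic dimension),
then the convolution `K₁ ∗ K₂` is well-defined away from the origin and is a kernel of
order `ζ`, with `‖K₁ ∗ K₂‖_ζ ≲ ‖K₁‖_{ζ₁}‖K₂‖_{ζ₂}` (constant independent of the kernels). -/
theorem kernel_convolution_order {d : ℕ} (ζ₁ ζ₂ : ℝ)
    (hζ₁ : -((d : ℝ) + 2) < ζ₁) (hζ₂ : -((d : ℝ) + 2) < ζ₂)
    (hζ : ζ₁ + ζ₂ + ((d : ℝ) + 2) < 0) :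
    ∃ C : ℝ, 0 < C ∧ ∀ (K₁ K₂ : ℝ × (Fin d → ℝ) → ℝ) (C₁ C₂ : ℝ),
      Measurable K₁ → Measurable K₂ →
      (∀ z, 1 ≤ pnorm z → K₁ z = 0) → (∀ z, 1 ≤ pnorm z → K₂ z = 0) →
      (∀ z, 0 < pnorm z → |K₁ z| ≤ C₁ * pnorm z ^ ζ₁) →
      (∀ z, 0 < pnorm z → |K₂ z| ≤ C₂ * pnorm z ^ ζ₂) →
      ∀ z : ℝ × (Fin d → ℝ), 0 < pnorm z → pnorm z < 1 →
        Integrable (fun y => K₁ y * K₂ (z - y)) volume ∧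
        |∫ y, K₁ y * K₂ (z - y)| ≤ C * C₁ * C₂ * pnorm z ^ (ζ₁ + ζ₂ + ((d : ℝ) + 2)) := by
  have hz₁0 : ζ₁ < 0 := by linarith
  have hz₂0 : ζ₂ < 0 := by linarith
  obtain ⟨A₁, hA₁, hA₁int⟩ := small_int ζ₁ hζ₁ hz₁0
  obtain ⟨A₂, hA₂, hA₂int⟩ := small_int ζ₂ hζ₂ hz₂0
  obtain ⟨B, hB, hBint⟩ := big_int (d := d) (ζ₁+ζ₂) (by linarith)
  set D : ℝ := (d:ℝ) + 2 with hD
  set ζ : ℝ := ζ₁ + ζ₂ + D with hζdef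
  set c₄ : ℝ := (1/4:ℝ) ^ ζ₂ with hc₄
  have hc₄0 : 0 < c₄ := Real.rpow_pos_of_pos (by norm_num) _
  set half : ℝ := (1/2:ℝ) ^ ζ with hhalf
  have hhalf0 : 0 < half := Real.rpow_pos_of_pos (by norm_num) _
  refine ⟨(A₁ + A₂ + c₄*B) * half, by positivity, ?_⟩
  intro K₁ K₂ C₁ C₂ hK₁m hK₂m hK₁s hK₂s hK₁b hK₂b z hz0 hz1
  set R : ℝ := pnorm z with hR
  have hR2 : 0 < R/2 := by linarith
  have hC₁0 : 0 ≤ C₁ := by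
    nlinarith [hK₁b z hz0, abs_nonneg (K₁ z), Real.rpow_pos_of_pos hz0 ζ₁]
  have hC₂0 : 0 ≤ C₂ := by
    nlinarith [hK₂b z hz0, abs_nonneg (K₂ z), Real.rpow_pos_of_pos hz0 ζ₂]
  set E₁ : Set (ℝ × (Fin d → ℝ)) := {y | pnorm y ≤ R/2} with hE₁
  set E₂ : Set (ℝ × (Fin d → ℝ)) := {y | pnorm (z - y) ≤ R/2} with hE₂
  have hE₁m : MeasurableSet E₁ := measurableSet_le measurable_pnorm measurable_const
  have hE₂m : MeasurableSet E₂ :=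
    measurableSet_le (measurable_pnorm.comp (measurable_const.sub measurable_id)) measurable_const
  have htri : ∀ y : ℝ × (Fin d → ℝ), R ≤ pnorm (z - y) + pnorm y := by
    intro y
    have h := pnorm_add_le (z - y) y
    rw [sub_add_cancel] at h
    exact h
  set F : (ℝ × (Fin d → ℝ)) → ℝ≥0∞ := fun y => ENNReal.ofReal |K₁ y * K₂ (z - y)| with hF
  -- region 1
  have hI₁ : ∫⁻ y in E₁, F y ≤
      ENNReal.ofReal ((C₁ * C₂ * (R/2) ^ ζ₂) * (A₁ * (R/2) ^ (ζ₁ + D))) := by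
    set S₁ : Set (ℝ × (Fin d → ℝ)) := {y | 0 < pnorm y ∧ pnorm y ≤ R/2} with hS₁
    have hS₁m : MeasurableSet S₁ :=
      (measurableSet_lt measurable_const measurable_pnorm).inter
        (measurableSet_le measurable_pnorm measurable_const)
    have hsub : E₁ ⊆ S₁ ∪ {0} := by
      intro y hy
      rcases eq_or_lt_of_le (pnorm_nonneg y) with h0 | h0
      · right; exact pnorm_eq_zero h0.symm
      · left; exact ⟨h0, hy⟩
    refine le_trans (lintegral_mono_set hsub) (le_trans (lintegral_union_le _ _ _) ?_)
    rw [setLIntegral_measure_zero _ _ (vol_singleton_zero 0), add_zero]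
    have hpt : ∀ y ∈ S₁, F y ≤
        ENNReal.ofReal (C₁ * C₂ * (R/2) ^ ζ₂) * ENNReal.ofReal (pnorm y ^ ζ₁) := by
      intro y hy
      have hzy : R/2 ≤ pnorm (z - y) := by
        have := htri y; have := hy.2; linarith
      have h2 : |K₂ (z - y)| ≤ C₂ * (R/2) ^ ζ₂ :=
        le_trans (hK₂b _ (lt_of_lt_of_le hR2 hzy))
          (mul_le_mul_of_nonneg_left (Real.rpow_le_rpow_of_nonpos hR2 hzy hz₂0.le) hC₂0)
      have h1 : |K₁ y| ≤ C₁ * pnorm y ^ ζ₁ := hK₁b y hy.1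
      rw [← ENNReal.ofReal_mul (mul_nonneg (mul_nonneg hC₁0 hC₂0) (Real.rpow_nonneg hR2.le _))]
      apply ENNReal.ofReal_le_ofReal
      rw [abs_mul]
      calc |K₁ y| * |K₂ (z - y)|
          ≤ (C₁ * pnorm y ^ ζ₁) * (C₂ * (R/2) ^ ζ₂) :=
            mul_le_mul h1 h2 (abs_nonneg _)
              (mul_nonneg hC₁0 (Real.rpow_nonneg (pnorm_nonneg y) _))
        _ = C₁ * C₂ * (R/2) ^ ζ₂ * pnorm y ^ ζ₁ := by ring
    calc ∫⁻ y in S₁, F y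
        ≤ ∫⁻ y in S₁, ENNReal.ofReal (C₁ * C₂ * (R/2) ^ ζ₂) *
            ENNReal.ofReal (pnorm y ^ ζ₁) := setLIntegral_mono' hS₁m hpt
      _ = ENNReal.ofReal (C₁ * C₂ * (R/2) ^ ζ₂) *
            ∫⁻ y in S₁, ENNReal.ofReal (pnorm y ^ ζ₁) :=
          lintegral_const_mul' _ _ ENNReal.ofReal_ne_top
      _ ≤ ENNReal.ofReal (C₁ * C₂ * (R/2) ^ ζ₂) *
            ENNReal.ofReal (A₁ * (R/2) ^ (ζ₁ + D)) :=
          mul_le_mul_right (hA₁int (R/2) hR2) _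
      _ = _ := (ENNReal.ofReal_mul
            (mul_nonneg (mul_nonneg hC₁0 hC₂0) (Real.rpow_nonneg hR2.le _))).symm
  -- region 2
  have hI₂ : ∫⁻ y in E₂, F y ≤
      ENNReal.ofReal ((C₁ * C₂ * (R/2) ^ ζ₁) * (A₂ * (R/2) ^ (ζ₂ + D))) := by
    set S₂ : Set (ℝ × (Fin d → ℝ)) := {w | 0 < pnorm w ∧ pnorm w ≤ R/2} with hS₂
    have hS₂m : MeasurableSet S₂ :=
      (measurableSet_lt measurable_const measurable_pnorm).inter
        (measurableSet_le measurable_pnorm measurable_const)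
    set G : (ℝ × (Fin d → ℝ)) → ℝ≥0∞ :=
      S₂.indicator (fun w => ENNReal.ofReal (pnorm w ^ ζ₂)) with hG
    have hGm : Measurable G := by
      apply Measurable.indicator _ hS₂m
      exact (measurable_pnorm.pow_const ζ₂).ennreal_ofReal
    have hpt : ∀ y ∈ E₂ \ {z}, F y ≤
        ENNReal.ofReal (C₁ * C₂ * (R/2) ^ ζ₁) * G (z - y) := by
      intro y hy
      obtain ⟨hyE, hyne⟩ := hy
      have hne : z - y ≠ 0 := sub_ne_zero.mpr (Ne.symm hyne)
      have hzy0 : 0 < pnorm (z - y) := by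
        rcases eq_or_lt_of_le (pnorm_nonneg (z - y)) with h0 | h0
        · exact absurd (pnorm_eq_zero h0.symm) hne
        · exact h0
      have hmem : z - y ∈ S₂ := ⟨hzy0, hyE⟩
      have hGval : G (z - y) = ENNReal.ofReal (pnorm (z - y) ^ ζ₂) :=
        Set.indicator_of_mem hmem _
      have hy2 : R/2 ≤ pnorm y := by
        have := htri y; have : pnorm (z - y) ≤ R/2 := hyE; linarith [htri y]
      have h1 : |K₁ y| ≤ C₁ * (R/2) ^ ζ₁ :=
        le_trans (hK₁b y (lt_of_lt_of_le hR2 hy2))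
          (mul_le_mul_of_nonneg_left (Real.rpow_le_rpow_of_nonpos hR2 hy2 hz₁0.le) hC₁0)
      have h2 : |K₂ (z - y)| ≤ C₂ * pnorm (z - y) ^ ζ₂ := hK₂b _ hzy0
      rw [hGval, ← ENNReal.ofReal_mul (mul_nonneg (mul_nonneg hC₁0 hC₂0) (Real.rpow_nonneg hR2.le _))]
      apply ENNReal.ofReal_le_ofReal
      rw [abs_mul]
      calc |K₁ y| * |K₂ (z - y)|
          ≤ (C₁ * (R/2) ^ ζ₁) * (C₂ * pnorm (z - y) ^ ζ₂) :=
            mul_le_mul h1 h2 (abs_nonneg _)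
              (mul_nonneg hC₁0 (Real.rpow_nonneg hR2.le _))
        _ = C₁ * C₂ * (R/2) ^ ζ₁ * pnorm (z - y) ^ ζ₂ := by ring
    have hsub : E₂ ⊆ (E₂ \ {z}) ∪ {z} := by
      intro y hy
      by_cases h : y = z
      · right; exact h
      · left; exact ⟨hy, h⟩
    refine le_trans (lintegral_mono_set hsub) (le_trans (lintegral_union_le _ _ _) ?_)
    rw [setLIntegral_measure_zero _ _ (vol_singleton_zero z), add_zero]
    calc ∫⁻ y in E₂ \ {z}, F y
        ≤ ∫⁻ y in E₂ \ {z}, ENNReal.ofReal (C₁ * C₂ * (R/2) ^ ζ₁) * G (z - y) :=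
          setLIntegral_mono' (hE₂m.diff (measurableSet_singleton z)) hpt
      _ ≤ ∫⁻ y, ENNReal.ofReal (C₁ * C₂ * (R/2) ^ ζ₁) * G (z - y) := by
          conv_rhs => rw [← setLIntegral_univ]
          exact lintegral_mono_set (Set.subset_univ _)
      _ = ENNReal.ofReal (C₁ * C₂ * (R/2) ^ ζ₁) * ∫⁻ y, G (z - y) :=
          lintegral_const_mul' _ _ ENNReal.ofReal_ne_top
      _ = ENNReal.ofReal (C₁ * C₂ * (R/2) ^ ζ₁) * ∫⁻ w, G w := by
          rw [(measurePreserving_sub_left' z).lintegral_comp hGm]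
      _ = ENNReal.ofReal (C₁ * C₂ * (R/2) ^ ζ₁) *
            ∫⁻ w in S₂, ENNReal.ofReal (pnorm w ^ ζ₂) := by
          rw [hG, lintegral_indicator hS₂m]
      _ ≤ ENNReal.ofReal (C₁ * C₂ * (R/2) ^ ζ₁) *
            ENNReal.ofReal (A₂ * (R/2) ^ (ζ₂ + D)) :=
          mul_le_mul_right (hA₂int (R/2) hR2) _
      _ = _ := (ENNReal.ofReal_mul
            (mul_nonneg (mul_nonneg hC₁0 hC₂0) (Real.rpow_nonneg hR2.le _))).symm
  -- region 3
  have hI₃ : ∫⁻ y in (E₁ ∪ E₂)ᶜ, F y ≤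
      ENNReal.ofReal ((C₁ * C₂ * c₄) * (B * (R/2) ^ (ζ₁ + ζ₂ + D))) := by
    have hpt : ∀ y ∈ (E₁ ∪ E₂)ᶜ, F y ≤
        ENNReal.ofReal (C₁ * C₂ * c₄) * ENNReal.ofReal (pnorm y ^ (ζ₁ + ζ₂)) := by
      intro y hy
      simp only [Set.mem_compl_iff, Set.mem_union, not_or, hE₁, hE₂, Set.mem_setOf_eq] at hy
      obtain ⟨hy1, hy2⟩ := hy
      rw [not_le] at hy1 hy2
      by_cases hbig : 1 ≤ pnorm y
      · have : K₁ y = 0 := hK₁s y hbig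
        rw [hF]
        simp only [this, zero_mul, abs_zero, ENNReal.ofReal_zero]
        exact zero_le
      · have hy0 : 0 < pnorm y := lt_trans hR2 hy1
        have hq : pnorm y / 4 ≤ pnorm (z - y) := by
          rcases le_or_gt (pnorm y) (2*R) with hc | hc
          · linarith
          · have hrev : pnorm y ≤ pnorm (z - y) + R := by
              have h := pnorm_add_le (y - z) z
              rw [sub_add_cancel] at h
              have he : pnorm (y - z) = pnorm (z - y) := by
                rw [← pnorm_neg (y - z), neg_sub]
              linarith
            linarith
        have h2 : |K₂ (z - y)| ≤ C₂ * (pnorm y / 4) ^ ζ₂ :=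
          le_trans (hK₂b _ (lt_trans hR2 hy2))
            (mul_le_mul_of_nonneg_left
              (Real.rpow_le_rpow_of_nonpos (by positivity) hq hz₂0.le) hC₂0)
        have h4 : (pnorm y / 4 : ℝ) ^ ζ₂ = c₄ * pnorm y ^ ζ₂ := by
          rw [show (pnorm y / 4 : ℝ) = (1/4) * pnorm y by ring,
            Real.mul_rpow (by norm_num) (pnorm_nonneg y)]
        have h1 : |K₁ y| ≤ C₁ * pnorm y ^ ζ₁ := hK₁b y hy0
        rw [← ENNReal.ofReal_mul (mul_nonneg (mul_nonneg hC₁0 hC₂0) hc₄0.le)]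
        apply ENNReal.ofReal_le_ofReal
        rw [abs_mul]
        calc |K₁ y| * |K₂ (z - y)|
            ≤ (C₁ * pnorm y ^ ζ₁) * (C₂ * (pnorm y / 4) ^ ζ₂) :=
              mul_le_mul h1 h2 (abs_nonneg _)
                (mul_nonneg hC₁0 (Real.rpow_nonneg (pnorm_nonneg y) _))
          _ = C₁ * C₂ * c₄ * (pnorm y ^ ζ₁ * pnorm y ^ ζ₂) := by rw [h4]; ring
          _ = C₁ * C₂ * c₄ * pnorm y ^ (ζ₁ + ζ₂) := by rw [← Real.rpow_add hy0]
    calc ∫⁻ y in (E₁ ∪ E₂)ᶜ, F y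
        ≤ ∫⁻ y in (E₁ ∪ E₂)ᶜ, ENNReal.ofReal (C₁ * C₂ * c₄) *
            ENNReal.ofReal (pnorm y ^ (ζ₁ + ζ₂)) :=
          setLIntegral_mono' (hE₁m.union hE₂m).compl hpt
      _ = ENNReal.ofReal (C₁ * C₂ * c₄) *
            ∫⁻ y in (E₁ ∪ E₂)ᶜ, ENNReal.ofReal (pnorm y ^ (ζ₁ + ζ₂)) :=
          lintegral_const_mul' _ _ ENNReal.ofReal_ne_top
      _ ≤ ENNReal.ofReal (C₁ * C₂ * c₄) *
            ∫⁻ y in {y : ℝ × (Fin d → ℝ) | R/2 ≤ pnorm y},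
              ENNReal.ofReal (pnorm y ^ (ζ₁ + ζ₂)) := by
          apply mul_le_mul_right
          apply lintegral_mono_set
          intro y hy
          simp only [Set.mem_compl_iff, Set.mem_union, not_or, hE₁, Set.mem_setOf_eq] at hy ⊢
          linarith [not_le.mp hy.1]
      _ ≤ ENNReal.ofReal (C₁ * C₂ * c₄) *
            ENNReal.ofReal (B * (R/2) ^ (ζ₁ + ζ₂ + D)) :=
          mul_le_mul_right (hBint (R/2) hR2) _
      _ = _ := (ENNReal.ofReal_mul (mul_nonneg (mul_nonneg hC₁0 hC₂0) hc₄0.le)).symm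
  -- combine
  have key : ∀ u v : ℝ, u + v = ζ → (R/2:ℝ)^u * (R/2)^v = half * R^ζ := by
    intro u v huv
    rw [← Real.rpow_add hR2, huv, show (R/2 : ℝ) = (1/2)*R by ring,
      Real.mul_rpow (by norm_num) (pnorm_nonneg z)]
  have k1 : (R/2:ℝ)^ζ₂ * (R/2)^(ζ₁ + D) = half * R^ζ := key _ _ (by rw [hζdef]; ring)
  have k2 : (R/2:ℝ)^ζ₁ * (R/2)^(ζ₂ + D) = half * R^ζ := key _ _ (by rw [hζdef]; ring)
  have k3 : (R/2:ℝ)^(ζ₁ + ζ₂ + D) = half * R^ζ := by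
    have := key (ζ₁ + ζ₂ + D) 0 (by rw [hζdef]; ring)
    rwa [Real.rpow_zero, mul_one] at this
  have hItot : ∫⁻ y, F y ≤
      ENNReal.ofReal ((A₁ + A₂ + c₄*B) * half * C₁ * C₂ * R ^ ζ) := by
    have hsplit : ∫⁻ y, F y ≤
        (∫⁻ y in E₁, F y) + (∫⁻ y in E₂, F y) + ∫⁻ y in (E₁ ∪ E₂)ᶜ, F y := by
      have h0 : ∫⁻ y, F y = ∫⁻ y in (E₁ ∪ E₂) ∪ (E₁ ∪ E₂)ᶜ, F y := by
        rw [Set.union_compl_self, setLIntegral_univ]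
      rw [h0]
      refine le_trans (lintegral_union_le _ _ _) ?_
      exact add_le_add_left (lintegral_union_le _ _ _) _
    refine le_trans hsplit (le_trans (add_le_add (add_le_add hI₁ hI₂) hI₃) ?_)
    rw [← ENNReal.ofReal_add (by positivity) (by positivity),
      ← ENNReal.ofReal_add (by positivity) (by positivity)]
    apply ENNReal.ofReal_le_ofReal
    apply le_of_eq
    linear_combination (A₁*C₁*C₂) * k1 + (A₂*C₁*C₂) * k2 + (c₄*B*C₁*C₂) * k3
  have hmeas : Measurable (fun y => K₁ y * K₂ (z - y)) :=
    hK₁m.mul (hK₂m.comp (measurable_const.sub measurable_id))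
  have hFeq : ∀ y : ℝ × (Fin d → ℝ),
      ENNReal.ofReal ‖K₁ y * K₂ (z - y)‖ = F y := by
    intro y; rw [Real.norm_eq_abs]
  have hfin : HasFiniteIntegral (fun y => K₁ y * K₂ (z - y)) volume := by
    rw [hasFiniteIntegral_iff_norm]
    calc ∫⁻ y, ENNReal.ofReal ‖K₁ y * K₂ (z - y)‖ = ∫⁻ y, F y := by
          exact lintegral_congr hFeq
      _ ≤ ENNReal.ofReal ((A₁ + A₂ + c₄*B) * half * C₁ * C₂ * R ^ ζ) := hItot
      _ < ⊤ := ENNReal.ofReal_lt_top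
  refine ⟨⟨hmeas.aestronglyMeasurable, hfin⟩, ?_⟩
  calc |∫ y, K₁ y * K₂ (z - y)|
      = ‖∫ y, K₁ y * K₂ (z - y)‖ := (Real.norm_eq_abs _).symm
    _ ≤ (∫⁻ y, ENNReal.ofReal ‖K₁ y * K₂ (z - y)‖).toReal :=
        norm_integral_le_lintegral_norm _
    _ = (∫⁻ y, F y).toReal := by rw [lintegral_congr hFeq]
    _ ≤ (A₁ + A₂ + c₄*B) * half * C₁ * C₂ * R ^ ζ :=
        ENNReal.toReal_le_of_le_ofReal (by positivity) hItot
end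

section
/- Let X : [-1,1] → ℝ be a continuous function and α' ∈ (0,1). Then sup_{s≠t ∈ [-1,1]} |X(s) - X(t)|/|s-t|^{α'} ≲ sup_{k ≥ 0} sup_{s ∈ 2^{-k}ℤ ∩ [-1,1)} 2^{kα'} |X(s + 2^{-k}) - X(s)|, with an implied constant depending only on α'. -/
open Set Filter Topology

private lemma floor_double (x : ℝ) : ⌊2 * x⌋ = 2 * ⌊x⌋ ∨ ⌊2 * x⌋ = 2 * ⌊x⌋ + 1 := by
  have h1 : 2 * ⌊x⌋ ≤ ⌊2 * x⌋ := by
    apply Int.le_floor.2; push_cast; nlinarith [Int.floor_le x]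
  have h2 : ⌊2 * x⌋ < 2 * ⌊x⌋ + 2 := by
    apply Int.floor_lt.2; push_cast; nlinarith [Int.lt_floor_add_one x]
  omega

set_option maxHeartbeats 1000000 in
/-- deterministic dyadic increment bound underlying Kolmogorov's
continuity criterion.  For `α' ∈ (0,1)` there is a constant `C` (depending only on `α'`)
such that for every continuous `X : [-1,1] → ℝ`, if all dyadic increments satisfy
`2^{kα'} |X(s+2^{-k}) - X(s)| ≤ B` (over `k ≥ 0` and `s ∈ 2^{-k}ℤ ∩ [-1,1)`), then
`|X(s) - X(t)| ≤ C B |s-t|^{α'}` for all `s ≠ t ∈ [-1,1]`. -/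
theorem dyadic_holder_bound (α' : ℝ) (hα'₀ : 0 < α') (hα'₁ : α' < 1) :
    ∃ C : ℝ, 0 < C ∧ ∀ (X : ℝ → ℝ), ContinuousOn X (Set.Icc (-1) 1) →
      ∀ B : ℝ,
      (∀ (k : ℕ) (n : ℤ), ((n : ℝ) * 2 ^ (-(k:ℝ)) ∈ Set.Ico (-1:ℝ) 1) →
        2 ^ ((k:ℝ) * α') * |X ((n : ℝ) * 2 ^ (-(k:ℝ)) + 2 ^ (-(k:ℝ)))
            - X ((n : ℝ) * 2 ^ (-(k:ℝ)))| ≤ B) →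
      ∀ s ∈ Set.Icc (-1:ℝ) 1, ∀ t ∈ Set.Icc (-1:ℝ) 1, s ≠ t →
        |X s - X t| ≤ C * B * |s - t| ^ α' := by
  classical
  set q : ℝ := (2:ℝ) ^ (-α') with hqdef
  have hq0 : 0 < q := Real.rpow_pos_of_pos (by norm_num) _
  have hq1 : q < 1 := Real.rpow_lt_one_of_one_lt_of_neg (by norm_num) (by linarith)
  have h1q : 0 < 1 - q := by linarith
  set c : ℝ := (1 - q)⁻¹ with hcdef
  have hc0 : 0 < c := inv_pos.2 h1q
  have hcq : c * (1 - q) = 1 := inv_mul_cancel₀ (ne_of_gt h1q)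
  -- rpow/pow conversions
  have he : ∀ k : ℕ, (2:ℝ) ^ (-(k:ℝ)) = ((2:ℝ) ^ k)⁻¹ := by
    intro k
    rw [Real.rpow_neg (by norm_num), Real.rpow_natCast]
  have hqk : ∀ k : ℕ, q ^ k = (2:ℝ) ^ (-((k:ℝ) * α')) := by
    intro k
    rw [hqdef, ← Real.rpow_natCast ((2:ℝ) ^ (-α')) k,
      ← Real.rpow_mul (by norm_num : (0:ℝ) ≤ 2)]
    congr 1; ring
  have hqku : ∀ k : ℕ, q ^ k = (((2:ℝ) ^ k)⁻¹) ^ α' := by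
    intro k
    rw [← he k, ← Real.rpow_mul (by norm_num : (0:ℝ) ≤ 2), hqk k]
    congr 1; ring
  refine ⟨4 * c + 6, by positivity, ?_⟩
  intro X hX B H
  have hB : 0 ≤ B := by
    have h := H 0 (-1) (by norm_num)
    have h0 : ((0:ℕ):ℝ) = 0 := by norm_num
    rw [h0] at h
    simp only [zero_mul, neg_zero, Real.rpow_zero, one_mul] at h
    exact le_trans (abs_nonneg _) h
  -- restated hypothesis with natural powers
  have H' : ∀ (k : ℕ) (n : ℤ), -(2^k : ℤ) ≤ n → n < 2^k →
      |X (((n:ℝ) + 1) * ((2:ℝ)^k)⁻¹) - X ((n:ℝ) * ((2:ℝ)^k)⁻¹)| ≤ q ^ k * B := by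
    intro k n h1 h2
    have h2k : (0:ℝ) < 2 ^ k := by positivity
    have hn1 : -(2^k : ℝ) ≤ (n:ℝ) := by exact_mod_cast h1
    have hn2 : (n:ℝ) < 2 ^ k := by exact_mod_cast h2
    have hmem : (n : ℝ) * 2 ^ (-(k:ℝ)) ∈ Set.Ico (-1:ℝ) 1 := by
      rw [he k]
      constructor
      · have h := mul_le_mul_of_nonneg_right hn1 (le_of_lt (inv_pos.2 h2k))
        rw [neg_mul, mul_inv_cancel₀ (ne_of_gt h2k)] at h
        linarith
      · calc (n:ℝ) * ((2:ℝ)^k)⁻¹ < (2^k : ℝ) * ((2:ℝ)^k)⁻¹ :=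
            mul_lt_mul_of_pos_right hn2 (by positivity)
          _ = 1 := mul_inv_cancel₀ (ne_of_gt h2k)
    have h := H k n hmem
    have hprod : q ^ k * (2:ℝ) ^ ((k:ℝ) * α') = 1 := by
      rw [hqk k, ← Real.rpow_add (by norm_num : (0:ℝ) < 2)]
      simp
    have heq : ((n:ℝ) + 1) * ((2:ℝ)^k)⁻¹ = (n : ℝ) * 2 ^ (-(k:ℝ)) + 2 ^ (-(k:ℝ)) := by
      rw [he k]; ring
    have heq2 : (n:ℝ) * ((2:ℝ)^k)⁻¹ = (n : ℝ) * 2 ^ (-(k:ℝ)) := by rw [he k]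
    rw [heq, heq2]
    calc |X ((n : ℝ) * 2 ^ (-(k:ℝ)) + 2 ^ (-(k:ℝ))) - X ((n : ℝ) * 2 ^ (-(k:ℝ)))|
        = q ^ k * (2 ^ ((k:ℝ) * α') * |X ((n : ℝ) * 2 ^ (-(k:ℝ)) + 2 ^ (-(k:ℝ)))
            - X ((n : ℝ) * 2 ^ (-(k:ℝ)))|) := by
          rw [← mul_assoc, hprod, one_mul]
      _ ≤ q ^ k * B := mul_le_mul_of_nonneg_left h (by positivity)
  -- floor bounds
  have hfl : ∀ (m : ℕ) (y : ℝ), y ∈ Set.Icc (-1:ℝ) 1 →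
      -(2^m : ℤ) ≤ ⌊(2:ℝ)^m * y⌋ ∧ ⌊(2:ℝ)^m * y⌋ ≤ 2^m := by
    intro m y hy
    have h2m : (0:ℝ) < 2 ^ m := by positivity
    constructor
    · apply Int.le_floor.2
      push_cast
      nlinarith [hy.1]
    · have h : ((2:ℝ)^m * y) ≤ ((2^m : ℤ) : ℝ) := by push_cast; nlinarith [hy.2]
      calc ⌊(2:ℝ)^m * y⌋ ≤ ⌊((2^m : ℤ) : ℝ)⌋ := Int.floor_le_floor h
        _ = 2^m := Int.floor_intCast _
  -- level sum
  have lsum : ∀ (k : ℕ) (a b : ℤ), a ≤ b → -(2^k : ℤ) ≤ a → b ≤ 2^k →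
      |X ((b:ℝ) * ((2:ℝ)^k)⁻¹) - X ((a:ℝ) * ((2:ℝ)^k)⁻¹)| ≤ ((b - a : ℤ):ℝ) * (q ^ k * B) := by
    intro k a b hab ha
    refine Int.le_induction (motive := fun b _ => b ≤ 2^k →
      |X ((b:ℝ) * ((2:ℝ)^k)⁻¹) - X ((a:ℝ) * ((2:ℝ)^k)⁻¹)| ≤ ((b - a : ℤ):ℝ) * (q ^ k * B))
      ?_ ?_ b hab
    · intro _; simp
    · intro b hb ih
      intro hb1
      have ih' := ih (by omega)
      have hstep := H' k b (by omega) (by omega)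
      have hcast : ((b:ℝ) + 1) = ((b + 1 : ℤ) : ℝ) := by push_cast; ring
      calc |X (((b+1:ℤ):ℝ) * ((2:ℝ)^k)⁻¹) - X ((a:ℝ) * ((2:ℝ)^k)⁻¹)|
          ≤ |X (((b+1:ℤ):ℝ) * ((2:ℝ)^k)⁻¹) - X ((b:ℝ) * ((2:ℝ)^k)⁻¹)|
            + |X ((b:ℝ) * ((2:ℝ)^k)⁻¹) - X ((a:ℝ) * ((2:ℝ)^k)⁻¹)| := abs_sub_le _ _ _
        _ ≤ q ^ k * B + ((b - a : ℤ):ℝ) * (q ^ k * B) := by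
            rw [← hcast]; exact add_le_add hstep ih'
        _ = ((b + 1 - a : ℤ):ℝ) * (q ^ k * B) := by push_cast; ring
  -- dyadic approximation chain
  have chain : ∀ s ∈ Set.Icc (-1:ℝ) 1, ∀ k : ℕ,
      |X s - X ((⌊(2:ℝ)^k * s⌋ : ℝ) * ((2:ℝ)^k)⁻¹)| ≤ B * c * q ^ k := by
    intro s hs k
    set x : ℕ → ℝ := fun m => (⌊(2:ℝ)^m * s⌋ : ℝ) * ((2:ℝ)^m)⁻¹ with hxdef
    have hxmem : ∀ m, x m ∈ Set.Icc (-1:ℝ) 1 := by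
      intro m
      have h2m : (0:ℝ) < 2 ^ m := by positivity
      have h1' : -(2^m : ℝ) ≤ (⌊(2:ℝ)^m * s⌋ : ℝ) := by exact_mod_cast (hfl m s hs).1
      have h2' : (⌊(2:ℝ)^m * s⌋ : ℝ) ≤ (2^m : ℝ) := by exact_mod_cast (hfl m s hs).2
      constructor
      · show (-1:ℝ) ≤ (⌊(2:ℝ)^m * s⌋ : ℝ) * ((2:ℝ)^m)⁻¹
        have h := mul_le_mul_of_nonneg_right h1' (le_of_lt (inv_pos.2 h2m))
        rw [neg_mul, mul_inv_cancel₀ (ne_of_gt h2m)] at h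
        linarith
      · show (⌊(2:ℝ)^m * s⌋ : ℝ) * ((2:ℝ)^m)⁻¹ ≤ 1
        calc (⌊(2:ℝ)^m * s⌋ : ℝ) * ((2:ℝ)^m)⁻¹ ≤ (2^m:ℝ) * ((2:ℝ)^m)⁻¹ :=
            mul_le_mul_of_nonneg_right h2' (by positivity)
          _ = 1 := mul_inv_cancel₀ (ne_of_gt h2m)
    have hxle : ∀ m, x m ≤ s := by
      intro m
      have h2m : (0:ℝ) < 2 ^ m := by positivity
      have hle : (⌊(2:ℝ)^m * s⌋ : ℝ) ≤ (2:ℝ)^m * s := Int.floor_le _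
      show (⌊(2:ℝ)^m * s⌋ : ℝ) * ((2:ℝ)^m)⁻¹ ≤ s
      calc (⌊(2:ℝ)^m * s⌋ : ℝ) * ((2:ℝ)^m)⁻¹ ≤ ((2:ℝ)^m * s) * ((2:ℝ)^m)⁻¹ :=
          mul_le_mul_of_nonneg_right hle (by positivity)
        _ = s := by field_simp
    have hdist : ∀ m, |x m - s| ≤ (2⁻¹:ℝ)^m := by
      intro m
      have h2m : (0:ℝ) < 2 ^ m := by positivity
      have hgt : (2:ℝ)^m * s < (⌊(2:ℝ)^m * s⌋ : ℝ) + 1 := Int.lt_floor_add_one _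
      have hsx : s - x m ≤ ((2:ℝ)^m)⁻¹ := by
        have h := mul_lt_mul_of_pos_right hgt (inv_pos.2 h2m)
        have h2 : ((2:ℝ)^m * s) * ((2:ℝ)^m)⁻¹ = s := by field_simp
        have h3 : ((⌊(2:ℝ)^m * s⌋ : ℝ) + 1) * ((2:ℝ)^m)⁻¹ = x m + ((2:ℝ)^m)⁻¹ := by
          show _ = (⌊(2:ℝ)^m * s⌋ : ℝ) * ((2:ℝ)^m)⁻¹ + ((2:ℝ)^m)⁻¹; ring
        rw [h2, h3] at h
        linarith
      rw [abs_sub_comm, abs_of_nonneg (by linarith [hxle m]), inv_pow]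
      exact hsx
    -- one dyadic refinement step
    have step : ∀ m : ℕ, |X (x (m+1)) - X (x m)| ≤ q ^ (m+1) * B := by
      intro m
      have hkey : (2:ℝ)^(m+1) * s = 2 * ((2:ℝ)^m * s) := by ring
      have hsplit := floor_double ((2:ℝ)^m * s)
      have h2m : (0:ℝ) < 2 ^ m := by positivity
      rcases hsplit with h | h
      · have hx : x (m+1) = x m := by
          show (⌊(2:ℝ)^(m+1) * s⌋ : ℝ) * ((2:ℝ)^(m+1))⁻¹ = (⌊(2:ℝ)^m * s⌋ : ℝ) * ((2:ℝ)^m)⁻¹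
          rw [hkey, h]
          push_cast
          rw [pow_succ]
          field_simp
        rw [hx, sub_self, abs_zero]
        positivity
      · have hepow : (2:ℤ)^(m+1) = 2 * 2^m := by ring
        have hb1 : -(2^(m+1) : ℤ) ≤ 2 * ⌊(2:ℝ)^m * s⌋ := by
          have := (hfl m s hs).1; omega
        have hb2 : 2 * ⌊(2:ℝ)^m * s⌋ < 2^(m+1) := by
          have h2 := (hfl (m+1) s hs).2
          rw [hkey, h] at h2
          omega
        have hstep := H' (m+1) (2 * ⌊(2:ℝ)^m * s⌋) hb1 hb2
        have hp1 : ((2 * ⌊(2:ℝ)^m * s⌋ : ℤ):ℝ) * ((2:ℝ)^(m+1))⁻¹ = x m := by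
          show _ = (⌊(2:ℝ)^m * s⌋ : ℝ) * ((2:ℝ)^m)⁻¹
          push_cast
          rw [pow_succ]
          field_simp
        have hp2 : (((2 * ⌊(2:ℝ)^m * s⌋ : ℤ):ℝ) + 1) * ((2:ℝ)^(m+1))⁻¹ = x (m+1) := by
          show _ = (⌊(2:ℝ)^(m+1) * s⌋ : ℝ) * ((2:ℝ)^(m+1))⁻¹
          rw [hkey, h]
          push_cast
          ring
        rw [hp1, hp2] at hstep
        exact hstep
    -- finite chain
    have finite : ∀ M : ℕ, |X (x (k+M)) - X (x k)| ≤ B * c * (q^k - q^(k+M)) := by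
      intro M
      induction M with
      | zero => simp
      | succ M ih =>
        have hstep := step (k+M)
        have hpow : q^(k+(M+1)) = q^(k+M) * q := by rw [← pow_succ]; ring_nf
        have hpnn : (0:ℝ) ≤ q^(k+M) := by positivity
        calc |X (x (k+(M+1))) - X (x k)|
            ≤ |X (x ((k+M)+1)) - X (x (k+M))| + |X (x (k+M)) - X (x k)| := by
              rw [show k+(M+1) = (k+M)+1 by ring]
              exact abs_sub_le _ _ _
          _ ≤ q^((k+M)+1) * B + B * c * (q^k - q^(k+M)) := add_le_add hstep ih
          _ ≤ B * c * (q^k - q^(k+(M+1))) := by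
              rw [hpow, pow_succ]
              nlinarith [mul_nonneg hB hpnn, mul_nonneg (mul_nonneg hB hpnn) (le_of_lt hq0)]
    -- pass to the limit
    have hxtend : Tendsto x atTop (𝓝 s) := by
      rw [tendsto_iff_dist_tendsto_zero]
      apply squeeze_zero (fun m => dist_nonneg) (fun m => ?_)
        (tendsto_pow_atTop_nhds_zero_of_lt_one (by norm_num) (by norm_num : (2⁻¹:ℝ) < 1))
      rw [Real.dist_eq]
      exact hdist m
    have hshift : Tendsto (fun M : ℕ => k + M) atTop atTop := by
      simpa [Nat.add_comm] using tendsto_add_atTop_nat k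
    have hXx : Tendsto (fun M => X (x (k+M))) atTop (𝓝 (X s)) := by
      have hcw : ContinuousWithinAt X (Set.Icc (-1:ℝ) 1) s := hX s hs
      apply hcw.tendsto.comp
      exact tendsto_nhdsWithin_of_tendsto_nhds_of_eventually_within _
        (hxtend.comp hshift) (Eventually.of_forall fun M => hxmem _)
    have hlim : Tendsto (fun M => |X (x (k+M)) - X (x k)|) atTop (𝓝 |X s - X (x k)|) :=
      (hXx.sub tendsto_const_nhds).abs
    have : |X s - X (x k)| ≤ B * c * q ^ k := by
      refine le_of_tendsto hlim (Eventually.of_forall fun M => le_trans (finite M) ?_)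
      nlinarith [pow_nonneg (le_of_lt hq0) (k+M), mul_nonneg hB (le_of_lt hc0)]
    exact this
  -- main estimate for s < t
  have key : ∀ s ∈ Set.Icc (-1:ℝ) 1, ∀ t ∈ Set.Icc (-1:ℝ) 1, s < t →
      |X t - X s| ≤ (4 * c + 6) * B * (t - s) ^ α' := by
    intro s hs t ht hst
    set d : ℝ := t - s with hddef
    have hd0 : 0 < d := by simp [hddef]; linarith
    have hdnn : (0:ℝ) ≤ d := le_of_lt hd0
    have hex : ∃ k : ℕ, ((2:ℝ)⁻¹)^(k+1) < d := by
      obtain ⟨n, hn⟩ := exists_pow_lt_of_lt_one hd0 (by norm_num : (2⁻¹:ℝ) < 1)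
      exact ⟨n, lt_of_le_of_lt
        (pow_le_pow_of_le_one (by norm_num) (by norm_num) (Nat.le_succ n)) hn⟩
    set k : ℕ := Nat.find hex with hkdef
    have hPk : ((2:ℝ)⁻¹)^(k+1) < d := Nat.find_spec hex
    have h2k : (0:ℝ) < 2 ^ k := by positivity
    have hu0 : 0 < ((2:ℝ)^k)⁻¹ := by positivity
    have huinvpow : ((2:ℝ)^k)⁻¹ = (2⁻¹:ℝ)^k := by rw [inv_pow]
    have hud : ((2:ℝ)^k)⁻¹ < 2 * d := by
      have h' : ((2:ℝ)⁻¹)^(k+1) = ((2:ℝ)^k)⁻¹ * 2⁻¹ := by rw [huinvpow, pow_succ]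
      rw [h'] at hPk
      linarith
    have h2ku : (2:ℝ)^k * ((2:ℝ)^k)⁻¹ = 1 := mul_inv_cancel₀ (ne_of_gt h2k)
    have hab : ⌊(2:ℝ)^k * s⌋ ≤ ⌊(2:ℝ)^k * t⌋ := Int.floor_le_floor (by nlinarith)
    have ha := (hfl k s hs).1
    have hb := (hfl k t ht).2
    have hchs := chain s hs k
    have hcht := chain t ht k
    have hsum := lsum k ⌊(2:ℝ)^k * s⌋ ⌊(2:ℝ)^k * t⌋ hab ha hb
    have hqknn : (0:ℝ) ≤ q ^ k := by positivity
    have hdα : (0:ℝ) < d ^ α' := Real.rpow_pos_of_pos hd0 _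
    -- bound 1 : q^k ≤ 2 d^α'
    have hbound1 : q ^ k ≤ 2 * d ^ α' := by
      rw [hqku k]
      calc (((2:ℝ)^k)⁻¹) ^ α' ≤ (2*d) ^ α' :=
          Real.rpow_le_rpow (le_of_lt hu0) (le_of_lt hud) (le_of_lt hα'₀)
        _ = (2:ℝ) ^ α' * d ^ α' := Real.mul_rpow (by norm_num) hdnn
        _ ≤ 2 * d ^ α' := by
            have h1 : (2:ℝ) ^ α' ≤ (2:ℝ) ^ (1:ℝ) :=
              Real.rpow_le_rpow_of_exponent_le (by norm_num) (le_of_lt hα'₁)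
            rw [Real.rpow_one] at h1
            nlinarith [le_of_lt hdα]
    -- bound 2 : (b - a) q^k ≤ 6 d^α'
    have hba : ((⌊(2:ℝ)^k * t⌋ - ⌊(2:ℝ)^k * s⌋ : ℤ):ℝ) ≤ (2:ℝ)^k * d + 1 := by
      have h1 : ((⌊(2:ℝ)^k * t⌋:ℤ):ℝ) ≤ (2:ℝ)^k * t := Int.floor_le _
      have h2 : (2:ℝ)^k * s < ((⌊(2:ℝ)^k * s⌋:ℤ):ℝ) + 1 := Int.lt_floor_add_one _
      push_cast
      push_cast at h1 h2
      nlinarith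
    have hbound2 : ((⌊(2:ℝ)^k * t⌋ - ⌊(2:ℝ)^k * s⌋ : ℤ):ℝ) * q ^ k ≤ 6 * d ^ α' := by
      rcases Nat.eq_zero_or_pos k with hk0 | hk1
      · -- k = 0
        have hq0' : q ^ k = 1 := by rw [hk0, pow_zero]
        have hba2 : ((⌊(2:ℝ)^k * t⌋ - ⌊(2:ℝ)^k * s⌋ : ℤ):ℝ) ≤ 2 := by
          have hb' := hb
          have ha' := ha
          rw [hk0] at hb' ha'
          have h : (⌊(2:ℝ)^k * t⌋ - ⌊(2:ℝ)^k * s⌋ : ℤ) ≤ 2 := by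
            rw [hk0]; omega
          exact_mod_cast h
        have hd12 : (1/2 : ℝ) < d := by
          have h' := hPk
          rw [hk0] at h'
          norm_num at h'
          linarith
        have hdh : (1/2 : ℝ) ≤ d ^ α' := by
          have h1 : ((1:ℝ)/2) ^ α' ≤ d ^ α' :=
            Real.rpow_le_rpow (by norm_num) (le_of_lt hd12) (le_of_lt hα'₀)
          have h2 : ((1:ℝ)/2) ^ (1:ℝ) ≤ ((1:ℝ)/2) ^ α' :=
            Real.rpow_le_rpow_of_exponent_ge (by norm_num) (by norm_num) (le_of_lt hα'₁)
          rw [Real.rpow_one] at h2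
          linarith
        rw [hq0', mul_one]
        linarith
      · -- k ≥ 1
        have hmm : ¬ ((2⁻¹:ℝ)^((k-1)+1) < d) := Nat.find_min hex (by omega)
        rw [Nat.sub_add_cancel hk1] at hmm
        push_neg at hmm
        have hdu : d ≤ ((2:ℝ)^k)⁻¹ := by rw [huinvpow]; exact hmm
        have h2kd : (2:ℝ)^k * d ≤ 1 := by
          calc (2:ℝ)^k * d ≤ (2:ℝ)^k * ((2:ℝ)^k)⁻¹ :=
              mul_le_mul_of_nonneg_left hdu (le_of_lt h2k)
            _ = 1 := h2ku
        have h2kd2 : (1:ℝ) < 2 * ((2:ℝ)^k * d) := by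
          have h' : ((2:ℝ)⁻¹)^(k+1) = ((2:ℝ)^k)⁻¹ * 2⁻¹ := by rw [huinvpow, pow_succ]
          rw [h'] at hPk
          have h4 : (2:ℝ)^k * (((2:ℝ)^k)⁻¹ * 2⁻¹) < (2:ℝ)^k * d :=
            mul_lt_mul_of_pos_left hPk h2k
          rw [← mul_assoc, h2ku, one_mul] at h4
          have h5 := mul_lt_mul_of_pos_left h4 (by norm_num : (0:ℝ) < 2)
          norm_num at h5
          linarith
        calc ((⌊(2:ℝ)^k * t⌋ - ⌊(2:ℝ)^k * s⌋ : ℤ):ℝ) * q ^ k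
            ≤ ((2:ℝ)^k * d + 1) * q ^ k := mul_le_mul_of_nonneg_right hba hqknn
          _ ≤ (3 * ((2:ℝ)^k * d)) * q ^ k :=
              mul_le_mul_of_nonneg_right (by linarith) hqknn
          _ = ((2:ℝ)^k * d) * (3 * q ^ k) := by ring
          _ ≤ 1 * (3 * q ^ k) := by
              have h3q : (0:ℝ) ≤ 3 * q ^ k := by positivity
              exact mul_le_mul_of_nonneg_right h2kd h3q
          _ = 3 * q ^ k := one_mul _
          _ ≤ 6 * d ^ α' := by linarith
    -- assemble
    have h1 : |X t - X ((⌊(2:ℝ)^k * t⌋:ℝ) * ((2:ℝ)^k)⁻¹)| ≤ B * c * q ^ k := hcht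
    have h3 : |X ((⌊(2:ℝ)^k * s⌋:ℝ) * ((2:ℝ)^k)⁻¹) - X s| ≤ B * c * q ^ k := by
      rw [abs_sub_comm]; exact hchs
    have htri : |X t - X s| ≤ |X t - X ((⌊(2:ℝ)^k * t⌋:ℝ) * ((2:ℝ)^k)⁻¹)|
        + |X ((⌊(2:ℝ)^k * t⌋:ℝ) * ((2:ℝ)^k)⁻¹) - X ((⌊(2:ℝ)^k * s⌋:ℝ) * ((2:ℝ)^k)⁻¹)|
        + |X ((⌊(2:ℝ)^k * s⌋:ℝ) * ((2:ℝ)^k)⁻¹) - X s| := by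
      have e1 := abs_sub_le (X t) (X ((⌊(2:ℝ)^k * s⌋:ℝ) * ((2:ℝ)^k)⁻¹)) (X s)
      have e2 := abs_sub_le (X t) (X ((⌊(2:ℝ)^k * t⌋:ℝ) * ((2:ℝ)^k)⁻¹))
        (X ((⌊(2:ℝ)^k * s⌋:ℝ) * ((2:ℝ)^k)⁻¹))
      linarith
    have hBc : (0:ℝ) ≤ B * c := mul_nonneg hB (le_of_lt hc0)
    have e1 : B * c * q ^ k ≤ B * c * (2 * d ^ α') := mul_le_mul_of_nonneg_left hbound1 hBc
    have e2 : ((⌊(2:ℝ)^k * t⌋ - ⌊(2:ℝ)^k * s⌋ : ℤ):ℝ) * (q ^ k * B) ≤ (6 * d ^ α') * B := by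
      rw [← mul_assoc]
      exact mul_le_mul_of_nonneg_right hbound2 hB
    calc |X t - X s|
        ≤ B * c * q ^ k + ((⌊(2:ℝ)^k * t⌋ - ⌊(2:ℝ)^k * s⌋ : ℤ):ℝ) * (q ^ k * B)
          + B * c * q ^ k := by linarith [htri, h1, h3, hsum]
      _ ≤ B * c * (2 * d ^ α') + (6 * d ^ α') * B + B * c * (2 * d ^ α') := by linarith
      _ = (4 * c + 6) * B * d ^ α' := by ring
  -- conclude
  intro s hs t ht hst
  rcases lt_or_gt_of_ne hst with h | h
  · have := key s hs t ht h
    rw [abs_sub_comm (X s) (X t)] at *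
    rw [show |s - t| = t - s by rw [abs_sub_comm, abs_of_pos (by linarith)]]
    exact this
  · have := key t ht s hs h
    rw [show |s - t| = s - t by rw [abs_of_pos (by linarith)]]
    exact this
end

section
/- Let α > 1 not an integer, and let f : ℝ^{d+1} → ℝ be such that all parabolic derivatives D^j f with |j|_𝔰 ≤ α exist, are continuous, and satisfy the Taylor remainder bounds |D^j f(z̄) − Σ_{|k|_𝔰 ≤ α−|j|_𝔰} (1/k!) D^{j+k}f(z)(z̄−z)^k| ≤ C‖z̄−z‖_𝔰^{α−|j|_𝔰} for ‖z̄−z‖_𝔰 ≤ 1, z, z̄ in a compact 𝔎. Define F(z) := Σ_{|k|_𝔰 ≤ α} (1/k!) D^k f(z) X^k and Γ_{xy} := Γ_{y−x}. Then for every β ∈ ℕ with β < α, sup_{x,y ∈ 𝔎, x≠y} ‖F(x) − Γ_{xy}F(y)‖_β / ‖x−y‖_𝔰^{α−β} < ∞, where ‖·‖_β is the ℓ¹ norm on the coefficients of monomials of parabolic degree β. -/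
open MvPolynomial

/-- Parabolic norm `‖z‖_𝔰 = |z₀|^{1/2} + Σ_{j≥1} |z_j|` on `ℝ^{d+1}` (index 0 = time). -/
noncomputable def pnormP {d : ℕ} (z : Fin (d + 1) → ℝ) : ℝ :=
  Real.sqrt |z 0| + ∑ i ∈ Finset.univ.erase 0, |z i|

/-- Parabolic degree of a multi-index: `|k|_𝔰 = 2k₀ + Σ_{j≥1} k_j = k₀ + Σ_j k_j`. -/
def pdeg {d : ℕ} (k : Fin (d + 1) →₀ ℕ) : ℕ :=
  k 0 + k.sum fun _ n => n

/-- Multi-index factorial `k! = Π_i (k_i)!`. -/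
def mfact {d : ℕ} (k : Fin (d + 1) →₀ ℕ) : ℕ :=
  k.prod fun _ n => n.factorial

/-- The translation `Γ_h X^k = (X - h)^k` on abstract polynomials. -/
noncomputable def Γpoly (d : ℕ) (h : Fin (d + 1) → ℝ) :
    MvPolynomial (Fin (d + 1)) ℝ →ₐ[ℝ] MvPolynomial (Fin (d + 1)) ℝ :=
  aeval fun i => X i - C (h i)

/-- The `ℓ¹` norm on the coefficients of monomials of parabolic degree `β`. -/
noncomputable def coeffNorm {d : ℕ} (β : ℕ) (p : MvPolynomial (Fin (d + 1)) ℝ) : ℝ :=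
  ∑ k ∈ p.support.filter (fun k => pdeg k = β), |coeff k p|

/-- The canonical lift `F(z) = Σ_{|k|_𝔰 ≤ α} (1/k!) D^k f(z) X^k`. -/
noncomputable def canonLift {d : ℕ} (α : ℝ)
    (Df : (Fin (d + 1) →₀ ℕ) → (Fin (d + 1) → ℝ) → ℝ)
    (z : Fin (d + 1) → ℝ) : MvPolynomial (Fin (d + 1)) ℝ :=
  ∑ᶠ k ∈ {k : Fin (d + 1) →₀ ℕ | (pdeg k : ℝ) ≤ α},
    monomial k (Df k z / (mfact k : ℝ))

variable {d : ℕ}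



lemma pdeg_eq (k : Fin (d+1) →₀ ℕ) : pdeg k = k 0 + ∑ i, k i := by
  rw [pdeg, Finsupp.sum_fintype]; intro i; rfl

lemma pdeg_add (a b : Fin (d+1) →₀ ℕ) : pdeg (a + b) = pdeg a + pdeg b := by
  simp [pdeg_eq, Finsupp.add_apply, Finset.sum_add_distrib]; ring

lemma apply_le_pdeg (k : Fin (d+1) →₀ ℕ) (i : Fin (d+1)) : k i ≤ pdeg k := by
  rw [pdeg_eq]
  exact le_add_of_nonneg_of_le (Nat.zero_le _)
    (Finset.single_le_sum (f := fun i => k i) (fun _ _ => Nat.zero_le _) (Finset.mem_univ i))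

lemma mfact_eq (k : Fin (d+1) →₀ ℕ) : (mfact k : ℝ) = ∏ i, ((k i).factorial : ℝ) := by
  rw [mfact, Finsupp.prod_fintype]
  · push_cast; rfl
  · intro i; rfl

lemma mfact_pos (k : Fin (d+1) →₀ ℕ) : 0 < (mfact k : ℝ) := by
  rw [mfact_eq]
  exact Finset.prod_pos fun i _ => by exact_mod_cast (k i).factorial_pos

lemma prod_monomial {ι : Type*} (s : Finset ι) (σ : ι → (Fin (d+1) →₀ ℕ)) (w : ι → ℝ) :
    ∏ i ∈ s, (monomial (σ i) (w i) : MvPolynomial (Fin (d+1)) ℝ)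
      = monomial (∑ i ∈ s, σ i) (∏ i ∈ s, w i) := by
  classical
  induction s using Finset.cons_induction with
  | empty => simp [MvPolynomial.monomial_zero']
  | cons a s ha ih =>
      rw [Finset.prod_cons, Finset.sum_cons, Finset.prod_cons, ih, MvPolynomial.monomial_mul]

lemma X_sub_C_pow (h : ℝ) (i : Fin (d+1)) (n : ℕ) :
    (X i - C h : MvPolynomial (Fin (d+1)) ℝ) ^ n
      = ∑ m ∈ Finset.range (n+1), monomial (Finsupp.single i m)
          ((n.choose m : ℝ) * (-h) ^ (n - m)) := by
  rw [sub_eq_add_neg, ← C_neg, add_pow]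
  refine Finset.sum_congr rfl fun m hm => ?_
  rw [← C_pow, X_pow_eq_monomial, C_apply, MvPolynomial.monomial_mul,
    show ((n.choose m : ℕ) : MvPolynomial (Fin (d+1)) ℝ) = C ((n.choose m : ℕ) : ℝ) by
      simp, C_apply, MvPolynomial.monomial_mul]
  simp [mul_comm]

lemma Γ_monomial (h : Fin (d+1) → ℝ) (k : Fin (d+1) →₀ ℕ) (c : ℝ) :
    Γpoly d h (monomial k c) = ∑ j ∈ Finset.Iic k,
      monomial j (c * ∏ i, ((k i).choose (j i) : ℝ) * (-h i) ^ (k i - j i)) := by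
  classical
  rw [Γpoly, aeval_monomial]
  rw [show (k.prod fun i n => (X i - C (h i) : MvPolynomial (Fin (d+1)) ℝ) ^ n)
      = ∏ i, (X i - C (h i)) ^ k i from Finsupp.prod_pow k _]
  simp_rw [X_sub_C_pow]
  rw [Finset.prod_univ_sum]
  simp_rw [prod_monomial]
  rw [algebraMap_eq, Finset.mul_sum]
  simp_rw [C_mul_monomial]
  refine Finset.sum_bij' (fun g _ => Finsupp.equivFunOnFinite.symm g)
    (fun j _ => (j : Fin (d+1) → ℕ)) ?_ ?_ ?_ ?_ ?_
  · intro g hg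
    rw [Finset.mem_Iic, Finsupp.le_def]
    intro i
    simp only [Finsupp.coe_equivFunOnFinite_symm]
    have := Finset.mem_range.mp ((Fintype.mem_piFinset.mp hg) i)
    omega
  · intro j hj
    rw [Fintype.mem_piFinset]
    intro i
    rw [Finset.mem_range]
    have := (Finsupp.le_def.mp (Finset.mem_Iic.mp hj)) i
    omega
  · intro g hg
    funext i
    simp
  · intro j hj
    simp
  · intro g hg
    have hs : ∑ i, Finsupp.single i (g i) = Finsupp.equivFunOnFinite.symm g := by
      have := Finsupp.univ_sum_single (Finsupp.equivFunOnFinite.symm g)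
      simpa using this
    rw [hs]
    congr 1

lemma coeff_Γ_monomial (h : Fin (d+1) → ℝ) (k j : Fin (d+1) →₀ ℕ) (c : ℝ) :
    coeff j (Γpoly d h (monomial k c))
      = c * ∏ i, ((k i).choose (j i) : ℝ) * (-h i) ^ (k i - j i) := by
  classical
  rw [Γ_monomial, MvPolynomial.coeff_sum]
  simp_rw [coeff_monomial]
  rw [Finset.sum_ite_eq' (Finset.Iic k) j]
  by_cases hj : j ≤ k
  · rw [if_pos (Finset.mem_Iic.mpr hj)]
  · rw [if_neg (fun hm => hj (Finset.mem_Iic.mp hm))]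
    obtain ⟨i, hi⟩ : ∃ i, k i < j i := by
      by_contra hc
      push_neg at hc
      exact hj (Finsupp.le_def.mpr hc)
    rw [Finset.prod_eq_zero (Finset.mem_univ i) (by
      rw [Nat.choose_eq_zero_of_lt hi]; simp), mul_zero]

noncomputable def Sb (d N b : ℕ) : Finset (Fin (d+1) →₀ ℕ) :=
  (Finset.Iic (Finsupp.equivFunOnFinite.symm (fun _ => N))).filter (fun k => pdeg k ≤ b)

lemma mem_Sb {N b : ℕ} (hb : b ≤ N) (k : Fin (d+1) →₀ ℕ) :
    k ∈ Sb d N b ↔ pdeg k ≤ b := by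
  rw [Sb, Finset.mem_filter]
  constructor
  · exact fun hk => hk.2
  · intro hk
    refine ⟨Finset.mem_Iic.mpr (Finsupp.le_def.mpr fun i => ?_), hk⟩
    simp only [Finsupp.coe_equivFunOnFinite_symm]
    exact le_trans (le_trans (apply_le_pdeg k i) hk) hb

lemma coe_Sb {N b : ℕ} (hb : b ≤ N) {c : ℝ} (hc : ∀ n : ℕ, (n : ℝ) ≤ c ↔ n ≤ b) :
    {k : Fin (d+1) →₀ ℕ | (pdeg k : ℝ) ≤ c} = ↑(Sb d N b) := by
  ext k
  simp [mem_Sb hb, hc]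

lemma mfact_mul_choose (j m : Fin (d+1) →₀ ℕ) :
    (mfact (j + m) : ℝ) = (mfact j : ℝ) * mfact m *
      ∏ i, (((j + m) i).choose (j i) : ℝ) := by
  rw [mfact_eq, mfact_eq, mfact_eq, ← Finset.prod_mul_distrib, ← Finset.prod_mul_distrib]
  refine Finset.prod_congr rfl fun i _ => ?_
  rw [Finsupp.add_apply]
  rw [show ((j i + m i).choose (j i) : ℝ) = ((j i + m i).choose (m i) : ℝ) by
    rw [Nat.choose_symm_add]]
  push_cast [← Nat.add_choose_mul_factorial_mul_factorial (j i) (m i)]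
  ring

lemma key_reindex (N β : ℕ) (hβ : β ≤ N) (j : Fin (d+1) →₀ ℕ) (hj : pdeg j = β)
    (G : (Fin (d+1) →₀ ℕ) → ℝ) (e : Fin (d+1) → ℝ) :
    ∑ k ∈ Sb d N N, (G k / mfact k) * ∏ i, ((k i).choose (j i) : ℝ) * (e i) ^ (k i - j i)
    = (1 / (mfact j : ℝ)) *
        ∑ m ∈ Sb d N (N - β), (G (j + m) / mfact m) * ∏ i, (e i) ^ (m i) := by
  classical
  rw [← Finset.sum_filter_of_ne (p := fun k => j ≤ k) (fun k _ hk => by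
    by_contra hc
    obtain ⟨i, hi⟩ : ∃ i, k i < j i := by
      by_contra hc2; push_neg at hc2; exact hc (Finsupp.le_def.mpr hc2)
    exact hk (by rw [Finset.prod_eq_zero (Finset.mem_univ i) (by
      rw [Nat.choose_eq_zero_of_lt hi]; simp), mul_zero]))]
  rw [Finset.mul_sum]
  refine Finset.sum_bij' (fun k _ => k - j) (fun m _ => j + m) ?_ ?_ ?_ ?_ ?_
  · intro k hk
    obtain ⟨hk1, hk2⟩ := Finset.mem_filter.mp hk
    rw [mem_Sb (Nat.sub_le _ _)]
    show pdeg (k - j) ≤ N - β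
    have hkk : j + (k - j) = k := add_tsub_cancel_of_le hk2
    have : pdeg j + pdeg (k - j) = pdeg k := by rw [← pdeg_add, hkk]
    have hkN : pdeg k ≤ N := (mem_Sb le_rfl k).mp hk1
    omega
  · intro m hm
    have hmm : pdeg m ≤ N - β := (mem_Sb (Nat.sub_le _ _) m).mp hm
    rw [Finset.mem_filter, mem_Sb le_rfl, pdeg_add]
    exact ⟨by omega, le_add_right le_rfl⟩
  · intro k hk
    exact add_tsub_cancel_of_le (Finset.mem_filter.mp hk).2
  · intro m hm
    show j + m - j = m
    exact add_tsub_cancel_left (a := j) (b := m)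
  · intro k hk
    obtain ⟨hk1, hk2⟩ := Finset.mem_filter.mp hk
    obtain ⟨m, rfl⟩ : ∃ m, k = j + m := ⟨k - j, (add_tsub_cancel_of_le hk2).symm⟩
    show _ = 1 / (mfact j : ℝ) * (G (j + (j + m - j)) / ↑(mfact (j + m - j)) *
      ∏ i, e i ^ (j + m - j) i)
    rw [add_tsub_cancel_left, Finset.prod_mul_distrib]
    have h1 : ∀ i, (j + m) i - j i = m i := fun i => by
      rw [Finsupp.add_apply]; omega
    simp_rw [h1]
    rw [mfact_mul_choose j m]
    have h2 := mfact_pos (d := d) j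
    have h3 := mfact_pos (d := d) m
    have h4 : (0:ℝ) < ∏ i, ((j i + m i).choose (j i) : ℝ) := by
      refine Finset.prod_pos fun i _ => ?_
      have : 0 < (j i + m i).choose (j i) := Nat.choose_pos (by omega)
      exact_mod_cast this
    have h2' : (mfact j : ℝ) ≠ 0 := ne_of_gt h2
    have h3' : (mfact m : ℝ) ≠ 0 := ne_of_gt h3
    have h4' : (∏ i, ((j i + m i).choose (j i) : ℝ)) ≠ 0 := ne_of_gt h4
    simp only [Finsupp.add_apply]
    field_simp

lemma pnormP_nonneg (z : Fin (d+1) → ℝ) : 0 ≤ pnormP z :=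
  add_nonneg (Real.sqrt_nonneg _) (Finset.sum_nonneg fun _ _ => abs_nonneg _)

lemma pnormP_pos {z : Fin (d+1) → ℝ} (hz : z ≠ 0) : 0 < pnormP z := by
  rcases lt_or_eq_of_le (pnormP_nonneg z) with h | h
  · exact h
  · exfalso
    apply hz
    have hs := Real.sqrt_nonneg |z 0|
    have hsum : 0 ≤ ∑ i ∈ Finset.univ.erase 0, |z i| :=
      Finset.sum_nonneg fun i _ => abs_nonneg (z i)
    have hh : Real.sqrt |z 0| + ∑ i ∈ Finset.univ.erase 0, |z i| = 0 := h.symm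
    have h1 : Real.sqrt |z 0| = 0 := by linarith
    have h2 : ∑ i ∈ Finset.univ.erase 0, |z i| = 0 := by linarith
    funext i
    by_cases hi : i = 0
    · subst hi
      have h3 : |z 0| ≤ 0 := Real.sqrt_eq_zero'.mp h1
      have : |z 0| = 0 := le_antisymm h3 (abs_nonneg _)
      simpa [abs_eq_zero] using this
    · have h4 : |z i| = 0 :=
        (Finset.sum_eq_zero_iff_of_nonneg fun i _ => abs_nonneg (z i)).mp h2 i
          (Finset.mem_erase.mpr ⟨hi, Finset.mem_univ i⟩)
      simpa [abs_eq_zero] using h4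

/-- if `f` has continuous parabolic derivatives `D^j f` for `|j|_𝔰 ≤ α`
(`α > 1` non-integer) satisfying the Taylor remainder bounds on a compact set `𝔎`, then
the canonical lift `F(z) = Σ_{|k|_𝔰 ≤ α}(1/k!)D^kf(z)X^k` satisfies, for every `β < α`,
`sup_{x≠y∈𝔎} ‖F(x) - Γ_{xy}F(y)‖_β / ‖x-y‖_𝔰^{α-β} < ∞`, where `Γ_{xy} = Γ_{y-x}` and
`‖·‖_β` is the `ℓ¹` norm on coefficients of monomials of parabolic degree `β`. -/
theorem canonical_lift_modelled_distribution {d : ℕ} (α : ℝ) (hα : 1 < α)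
    (hαnotint : ∀ n : ℕ, (n : ℝ) ≠ α)
    (f : (Fin (d + 1) → ℝ) → ℝ)
    (Df : (Fin (d + 1) →₀ ℕ) → (Fin (d + 1) → ℝ) → ℝ)
    (𝔎 : Set (Fin (d + 1) → ℝ)) (hK : IsCompact 𝔎)
    (C : ℝ)
    (hD0 : Df 0 = f)
    (hcont : ∀ k, (pdeg k : ℝ) ≤ α → Continuous (Df k))
    (htaylor : ∀ j : Fin (d + 1) →₀ ℕ, (pdeg j : ℝ) ≤ α →
      ∀ z ∈ 𝔎, ∀ w ∈ 𝔎, pnormP (w - z) ≤ 1 →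
        |Df j w - ∑ᶠ k ∈ {k : Fin (d + 1) →₀ ℕ | (pdeg k : ℝ) ≤ α - (pdeg j : ℝ)},
            (Df (j + k) z / (mfact k : ℝ)) * (k.prod fun i n => (w i - z i) ^ n)|
          ≤ C * pnormP (w - z) ^ (α - (pdeg j : ℝ))) :
    ∀ β : ℕ, (β : ℝ) < α → ∃ C' : ℝ,
      ∀ x ∈ 𝔎, ∀ y ∈ 𝔎, x ≠ y →
        coeffNorm β (canonLift α Df x - Γpoly d (y - x) (canonLift α Df y))
          ≤ C' * pnormP (x - y) ^ (α - (β : ℝ)) := by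
  intro β hβ
  classical
  have hα0 : (0:ℝ) ≤ α := by linarith
  set N := ⌊α⌋₊ with hN
  have hNα : ∀ n : ℕ, (n : ℝ) ≤ α ↔ n ≤ N := fun n =>
    ⟨fun h => Nat.le_floor h, fun h =>
      le_trans (by exact_mod_cast Nat.cast_le.mpr h) (Nat.floor_le hα0)⟩
  have hβN : β ≤ N := Nat.le_floor hβ.le
  have hset1 : {k : Fin (d+1) →₀ ℕ | (pdeg k : ℝ) ≤ α} = ↑(Sb d N N) := coe_Sb le_rfl hNα
  have hset2 : {k : Fin (d+1) →₀ ℕ | (pdeg k : ℝ) ≤ α - (β:ℝ)} = ↑(Sb d N (N - β)) := by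
    refine coe_Sb (Nat.sub_le _ _) fun n => ?_
    have h1 := hNα (n + β)
    push_cast at h1
    constructor
    · intro h
      have h2 : (n:ℝ) + β ≤ α := by linarith
      have := h1.mp h2; omega
    · intro h
      have h2 : n + β ≤ N := by omega
      have := h1.mpr (by exact_mod_cast h2); linarith
  have hF : ∀ z, canonLift α Df z = ∑ k ∈ Sb d N N, monomial k (Df k z / (mfact k : ℝ)) := by
    intro z; rw [canonLift, hset1, finsum_mem_coe_finset]
  have hcoeffF : ∀ z, ∀ j : Fin (d+1) →₀ ℕ, pdeg j ≤ N →
      coeff j (canonLift α Df z) = Df j z / (mfact j : ℝ) := by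
    intro z j hj
    rw [hF, MvPolynomial.coeff_sum]
    simp_rw [coeff_monomial]
    rw [Finset.sum_ite_eq' (Sb d N N) j, if_pos ((mem_Sb le_rfl j).mpr hj)]
  have hcoeffΓ : ∀ (x y : Fin (d+1) → ℝ) (j : Fin (d+1) →₀ ℕ),
      coeff j (Γpoly d (y - x) (canonLift α Df y))
        = ∑ k ∈ Sb d N N, (Df k y / (mfact k : ℝ)) *
            ∏ i, ((k i).choose (j i) : ℝ) * (x i - y i) ^ (k i - j i) := by
    intro x y j
    rw [hF, map_sum, MvPolynomial.coeff_sum]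
    refine Finset.sum_congr rfl fun k _ => ?_
    rw [coeff_Γ_monomial]
    congr 1
    refine Finset.prod_congr rfl fun i _ => ?_
    congr 2
    simp [Pi.sub_apply]
  obtain ⟨r, hr⟩ := (Metric.isBounded_iff_subset_closedBall 0).mp hK.isBounded
  set B : ℝ := 2 * max r 0 + 1 with hBdef
  have hB1 : (1:ℝ) ≤ B := by
    have := le_max_right r 0; simp only [hBdef]; linarith
  have hBz : ∀ z ∈ 𝔎, ∀ i, |z i| ≤ max r 0 := by
    intro z hz i
    have h1 : dist z 0 ≤ r := Metric.mem_closedBall.mp (hr hz)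
    rw [dist_zero_right] at h1
    calc |z i| = ‖z i‖ := (Real.norm_eq_abs _).symm
    _ ≤ ‖z‖ := norm_le_pi_norm z i
    _ ≤ max r 0 := le_trans h1 (le_max_left _ _)
  have hMex : ∀ k ∈ Sb d N N, ∃ Mk : ℝ, ∀ z ∈ 𝔎, |Df k z| ≤ Mk := by
    intro k hk
    obtain ⟨Mk, hMk⟩ := hK.exists_bound_of_continuousOn
      ((hcont k ((hNα _).mpr ((mem_Sb le_rfl k).mp hk))).continuousOn)
    exact ⟨Mk, fun z hz => by simpa [Real.norm_eq_abs] using hMk z hz⟩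
  choose! g hg using hMex
  set M : ℝ := ∑ k ∈ Sb d N N, max (g k) 0 with hMdef
  have hM0 : 0 ≤ M := Finset.sum_nonneg fun k _ => le_max_right _ _
  have hMb : ∀ k ∈ Sb d N N, ∀ z ∈ 𝔎, |Df k z| ≤ M := by
    intro k hk z hz
    calc |Df k z| ≤ g k := hg k hk z hz
    _ ≤ max (g k) 0 := le_max_left _ _
    _ ≤ M := Finset.single_le_sum (f := fun k => max (g k) 0)
        (fun k _ => le_max_right (g k) 0) hk
  set Tβ : Finset (Fin (d+1) →₀ ℕ) := (Sb d N N).filter (fun j => pdeg j = β) with hTβ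
  set W : (Fin (d+1) →₀ ℕ) → (Fin (d+1) →₀ ℕ) → ℝ :=
    fun k j => ∏ i, ((k i).choose (j i) : ℝ) * B ^ (k i - j i) with hWdef
  have hW0 : ∀ k j, 0 ≤ W k j := fun k j =>
    Finset.prod_nonneg fun i _ => mul_nonneg (Nat.cast_nonneg _) (by positivity)
  set C2 : ℝ := ∑ j ∈ Tβ, (M + ∑ k ∈ Sb d N N, M * W k j) with hC2
  have hC20 : 0 ≤ C2 :=
    Finset.sum_nonneg fun j _ => add_nonneg hM0
      (Finset.sum_nonneg fun k _ => mul_nonneg hM0 (hW0 k j))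
  set C1 : ℝ := (Tβ.card : ℝ) * max C 0 with hC1
  have hC10 : 0 ≤ C1 := mul_nonneg (Nat.cast_nonneg _) (le_max_right _ _)
  refine ⟨C1 + C2, fun x hx y hy hxy => ?_⟩
  have hpn : 0 < pnormP (x - y) := pnormP_pos (sub_ne_zero.mpr hxy)
  have hαβ : 0 < α - (β:ℝ) := by linarith
  have hpow : 0 < pnormP (x - y) ^ (α - (β:ℝ)) := Real.rpow_pos_of_pos hpn _
  set p : MvPolynomial (Fin (d+1)) ℝ :=
    canonLift α Df x - Γpoly d (y - x) (canonLift α Df y) with hp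
  have step0 : coeffNorm β p ≤ ∑ j ∈ Tβ, |coeff j p| := by
    rw [coeffNorm]
    refine Finset.sum_le_sum_of_subset_of_nonneg ?_ (fun j _ _ => abs_nonneg _)
    intro j hj
    obtain ⟨hj1, hj2⟩ := Finset.mem_filter.mp hj
    exact Finset.mem_filter.mpr ⟨(mem_Sb le_rfl j).mpr (hj2 ▸ hβN), hj2⟩
  rcases le_or_gt (pnormP (x - y)) 1 with hcase | hcase
  · -- Taylor case
    have perj : ∀ j ∈ Tβ, |coeff j p| ≤ max C 0 * pnormP (x - y) ^ (α - (β:ℝ)) := by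
      intro j hj
      obtain ⟨hj1, hj2⟩ := Finset.mem_filter.mp hj
      have hjN : pdeg j ≤ N := (mem_Sb le_rfl j).mp hj1
      have hjα : (pdeg j : ℝ) ≤ α := by rw [hj2]; exact hβ.le
      have ht := htaylor j hjα y hy x hx hcase
      rw [hj2, hset2, finsum_mem_coe_finset] at ht
      have hprod : ∀ k : Fin (d+1) →₀ ℕ,
          (k.prod fun i n => (x i - y i) ^ n) = ∏ i, (x i - y i) ^ k i :=
        fun k => Finsupp.prod_pow k _
      simp_rw [hprod] at ht
      have hcoeff : coeff j p = (1 / (mfact j : ℝ)) *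
          (Df j x - ∑ m ∈ Sb d N (N - β),
            (Df (j + m) y / (mfact m:ℝ)) * ∏ i, (x i - y i) ^ m i) := by
        rw [hp, MvPolynomial.coeff_sub, hcoeffF x j hjN, hcoeffΓ x y j,
          key_reindex N β hβN j hj2 (fun k => Df k y) (fun i => x i - y i)]
        ring
      rw [hcoeff, abs_mul]
      have hmf1 : (1:ℝ) ≤ (mfact j : ℝ) := by
        have h := mfact_pos (d := d) j
        exact_mod_cast Nat.one_le_iff_ne_zero.mpr (by exact_mod_cast h.ne')
      have h1 : |1 / (mfact j : ℝ)| ≤ 1 := by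
        rw [abs_of_pos (by positivity)]
        rw [div_le_one (by linarith)]
        exact hmf1
      calc |1/(mfact j:ℝ)| * |_| ≤ 1 * (max C 0 * pnormP (x-y) ^ (α - (β:ℝ))) := by
            refine mul_le_mul h1 ?_ (abs_nonneg _) zero_le_one
            exact le_trans ht (mul_le_mul_of_nonneg_right (le_max_left _ _) hpow.le)
      _ = max C 0 * pnormP (x-y) ^ (α - (β:ℝ)) := one_mul _
    calc coeffNorm β p ≤ ∑ j ∈ Tβ, |coeff j p| := step0
      _ ≤ ∑ _j ∈ Tβ, max C 0 * pnormP (x-y) ^ (α - (β:ℝ)) := Finset.sum_le_sum perj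
      _ = C1 * pnormP (x-y) ^ (α - (β:ℝ)) := by
          rw [Finset.sum_const, nsmul_eq_mul, hC1]; ring
      _ ≤ (C1 + C2) * pnormP (x-y) ^ (α - (β:ℝ)) := by nlinarith
  · -- crude case
    have hpow1 : 1 ≤ pnormP (x - y) ^ (α - (β:ℝ)) := Real.one_le_rpow hcase.le hαβ.le
    have perj : ∀ j ∈ Tβ, |coeff j p| ≤ M + ∑ k ∈ Sb d N N, M * W k j := by
      intro j hj
      have hj1 := (Finset.mem_filter.mp hj).1
      have hjN : pdeg j ≤ N := (mem_Sb le_rfl j).mp hj1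
      rw [hp, MvPolynomial.coeff_sub]
      refine le_trans (abs_sub _ _) (add_le_add ?_ ?_)
      · rw [hcoeffF x j hjN, abs_div, abs_of_pos (mfact_pos j)]
        calc |Df j x| / (mfact j : ℝ) ≤ |Df j x| := by
              refine div_le_self (abs_nonneg _) ?_
              have h := mfact_pos (d := d) j
              exact_mod_cast Nat.one_le_iff_ne_zero.mpr (by exact_mod_cast h.ne')
        _ ≤ M := hMb j hj1 x hx
      · rw [hcoeffΓ x y j]
        refine le_trans (Finset.abs_sum_le_sum_abs _ _) (Finset.sum_le_sum fun k hk => ?_)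
        rw [abs_mul]
        refine mul_le_mul ?_ ?_ (abs_nonneg _) hM0
        · rw [abs_div, abs_of_pos (mfact_pos k)]
          calc |Df k y| / (mfact k : ℝ) ≤ |Df k y| := by
                refine div_le_self (abs_nonneg _) ?_
                have h := mfact_pos (d := d) k
                exact_mod_cast Nat.one_le_iff_ne_zero.mpr (by exact_mod_cast h.ne')
          _ ≤ M := hMb k hk y hy
        · rw [Finset.abs_prod]
          refine Finset.prod_le_prod (fun i _ => abs_nonneg _) fun i _ => ?_
          rw [abs_mul, abs_pow, Nat.abs_cast]
          refine mul_le_mul_of_nonneg_left ?_ (Nat.cast_nonneg _)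
          refine pow_le_pow_left₀ (abs_nonneg _) ?_ _
          calc |x i - y i| ≤ |x i| + |y i| := abs_sub _ _
          _ ≤ max r 0 + max r 0 := add_le_add (hBz x hx i) (hBz y hy i)
          _ ≤ B := by rw [hBdef]; linarith
    calc coeffNorm β p ≤ ∑ j ∈ Tβ, |coeff j p| := step0
      _ ≤ ∑ j ∈ Tβ, (M + ∑ k ∈ Sb d N N, M * W k j) := Finset.sum_le_sum perj
      _ = C2 := hC2.symm
      _ ≤ C2 * pnormP (x-y) ^ (α - (β:ℝ)) := le_mul_of_one_le_right hC20 hpow1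
      _ ≤ (C1 + C2) * pnormP (x-y) ^ (α - (β:ℝ)) := by nlinarith
end
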